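/- arXiv:0709.4145 — 6 statements merged into one kernel-verified Lean document; each statement's English description precedes it below -/
import Mathlib

section
/- Let I ⊆ J ⊆ S be monomial ideals. The ℕ^n-graded module J/I is squarefree if and only if all minimal monomial generators of J/I are squarefree monomials and supp(u) ⊄ supp(m) for every monomial m ∈ J \ I and every u in the minimal monomial generating set G(I) of I. -/
open MvPolynomial

private lemma monUp {K : Type} [Field K] {n : ℕ} (I : Ideal (MvPolynomial (Fin n) K))
    {a c : Fin n →₀ ℕ} (h : a ≤ c) (ha : monomial a (1 : K) ∈ I) :
    monomial c (1 : K) ∈ I := by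
  have : monomial c (1 : K) = monomial (c - a) (1 : K) * monomial a 1 := by
    rw [monomial_mul, one_mul, tsub_add_cancel_of_le h]
  rw [this]; exact Ideal.mul_mem_left _ _ ha

private lemma subLt {n : ℕ} {b : Fin n →₀ ℕ} {j : Fin n} (h : 0 < b j) :
    b - Finsupp.single j 1 < b := by
  apply lt_of_le_of_ne tsub_le_self
  intro he
  have := congrArg (fun f => f j) he
  simp only [Finsupp.tsub_apply, Finsupp.single_eq_same] at this
  omega

private lemma subAdd {n : ℕ} {b : Finsupp (Fin n) ℕ} {j : Fin n} (h : 0 < b j) :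
    (b - Finsupp.single j 1) + Finsupp.single j 1 = b :=
  tsub_add_cancel_of_le (by rwa [Finsupp.single_le_iff])

private lemma descend {n : ℕ} (P : (Fin n →₀ ℕ) → Prop) :
    ∀ c, P c → ∃ b, b ≤ c ∧ P b ∧ ∀ j, 0 < b j → ¬ P (b - Finsupp.single j 1) := by
  intro c
  induction c using WellFoundedLT.induction with
  | _ c IH =>
    intro hc
    by_cases h : ∃ j, 0 < c j ∧ P (c - Finsupp.single j 1)
    · obtain ⟨j, hj, hP⟩ := h
      obtain ⟨b, hb1, hb2, hb3⟩ := IH _ (subLt hj) hP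
      exact ⟨b, hb1.trans tsub_le_self, hb2, hb3⟩
    · push_neg at h
      exact ⟨c, le_rfl, hc, fun j hj => h j hj⟩

/-- Let `I ⊆ J ⊆ S = K[x_1,…,x_n]` be monomial ideals.  Since all
graded components of `J/I` have `K`-dimension at most one, the `ℕⁿ`-graded
module `J/I` is squarefree (multiplication `(J/I)_a → (J/I)_{a+ε_i}` by `x_i`
is bijective for every `a` and every `i ∈ supp a`) if and only if every minimal
monomial generator of `J/I` is a squarefree monomial and
`supp(u) ⊄ supp(m)` for every monomial `m ∈ J \ I` and every `u ∈ G(I)`. -/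
theorem stmt2 (K : Type) [Field K] (n : ℕ)
    (I J : Ideal (MvPolynomial (Fin n) K))
    (A B : Set (Fin n →₀ ℕ))
    (hmI : I = Ideal.span ((fun a => (monomial a (1 : K))) '' A))
    (hmJ : J = Ideal.span ((fun a => (monomial a (1 : K))) '' B))
    (hIJ : I ≤ J) :
    -- squarefreeness of `J/I`, expressed componentwise on monomials
    (∀ (a : Fin n →₀ ℕ) (i : Fin n), 0 < a i →
        ((monomial a (1 : K) ∈ J ∧ monomial a (1 : K) ∉ I) ↔
          (monomial (a + Finsupp.single i 1) (1 : K) ∈ J ∧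
            monomial (a + Finsupp.single i 1) (1 : K) ∉ I)))
    ↔
    -- every minimal monomial generator of `J/I` is squarefree …
    ((∀ a : Fin n →₀ ℕ,
        (monomial a (1 : K) ∈ J ∧ monomial a (1 : K) ∉ I ∧
          ∀ i : Fin n, 0 < a i →
            ¬ (monomial (a - Finsupp.single i 1) (1 : K) ∈ J ∧
                monomial (a - Finsupp.single i 1) (1 : K) ∉ I)) →
        ∀ j, a j ≤ 1)
      ∧
      -- … and `supp(u) ⊄ supp(m)` for all monomials `m ∈ J \ I`, `u ∈ G(I)`
      (∀ a b : Fin n →₀ ℕ,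
        monomial a (1 : K) ∈ J → monomial a (1 : K) ∉ I →
        monomial b (1 : K) ∈ I →
        (∀ i : Fin n, 0 < b i → monomial (b - Finsupp.single i 1) (1 : K) ∉ I) →
        ¬ (∀ j, 0 < b j → 0 < a j))) := by
  constructor
  · intro hS
    constructor
    · -- minimal generators of J/I are squarefree
      rintro a ⟨haJ, haI, hmin⟩ j
      by_contra hcon
      push_neg at hcon
      have haj : 0 < a j := by omega
      apply hmin j haj
      have h1 : 0 < (a - Finsupp.single j 1 : Fin n →₀ ℕ) j := by
        rw [Finsupp.tsub_apply, Finsupp.single_eq_same]; omega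
      rw [hS _ j h1, subAdd haj]
      exact ⟨haJ, haI⟩
    · -- supp condition
      intro a b haJ haI hbI _hbmin hsupp
      -- grow: a + b ∈ M
      have grow : ∀ c : Fin n →₀ ℕ, (∀ j, 0 < c j → 0 < a j) →
          monomial (a + c) (1 : K) ∈ J ∧ monomial (a + c) (1 : K) ∉ I := by
        intro c
        induction c using WellFoundedLT.induction with
        | _ c IH =>
          intro hc
          by_cases hc0 : c = 0
          · subst hc0; simpa using ⟨haJ, haI⟩
          · obtain ⟨j, hj⟩ : ∃ j, 0 < c j := by
              by_contra h; push_neg at h; apply hc0; ext k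
              have := h k; simp; omega
            have hle : ∀ k, (c - Finsupp.single j 1 : Fin n →₀ ℕ) k ≤ c k := by
              intro k; rw [Finsupp.tsub_apply]; omega
            have h1 := IH _ (subLt hj) (fun k hk => hc k (lt_of_lt_of_le hk (hle k)))
            have h2 : 0 < (a + (c - Finsupp.single j 1) : Fin n →₀ ℕ) j := by
              rw [Finsupp.add_apply]
              have := hc j hj; omega
            have h3 := (hS _ j h2).mp h1
            rwa [add_assoc, subAdd hj] at h3
      have hab := grow b hsupp
      exact hab.2 (monUp I (by intro k; simp) hbI)
  · rintro ⟨h1, h2⟩ a i hai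
    constructor
    · rintro ⟨haJ, haI⟩
      refine ⟨monUp J (by intro k; rw [Finsupp.add_apply]; omega) haJ, ?_⟩
      intro hIn
      obtain ⟨b, hble, hbI, hbmin⟩ :=
        descend (fun c => monomial c (1 : K) ∈ I) _ hIn
      refine h2 a b haJ haI hbI hbmin (fun j hj => ?_)
      have hb := Finsupp.le_def.mp hble j
      rw [Finsupp.add_apply, Finsupp.single_apply] at hb
      by_cases hji : i = j
      · subst hji; exact hai
      · simp [hji] at hb; omega
    · rintro ⟨hJ1, hI1⟩
      refine ⟨?_, fun hIa =>
        hI1 (monUp I (by intro k; rw [Finsupp.add_apply]; omega) hIa)⟩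
      obtain ⟨c, hcle, hcM, hcmin⟩ :=
        descend (fun c => monomial c (1 : K) ∈ J ∧ monomial c (1 : K) ∉ I) _ ⟨hJ1, hI1⟩
      have hsf : ∀ j, c j ≤ 1 := h1 c ⟨hcM.1, hcM.2, hcmin⟩
      have hca : c ≤ a := by
        intro k
        have hk := Finsupp.le_def.mp hcle k
        rw [Finsupp.add_apply, Finsupp.single_apply] at hk
        by_cases hik : i = k
        · subst hik; have := hsf i; omega
        · simp [hik] at hk; omega
      exact monUp J hca hcM.1
end

section
/- Let M be a finitely generated ℤ^n-graded S-module with prime filtration 0 = M_0 ⊂ M_1 ⊂ … ⊂ M_r = M such that M_i/M_{i−1} ≅ S/P_{F_i}(−a_i). Then M decomposes as a direct sum of K-vector spaces M = ⊕_{i=1}^r m_i K[Z_{F_i}], where m_i ∈ M_i is a homogeneous element of degree a_i with (M_{i−1} :_S m_i) = P_{F_i} and Z_{F_i} = {x_j : j ∉ F_i}; each m_i K[Z_{F_i}] is a Stanley space, i.e., a free K[Z_{F_i}]-module of rank one. -/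
open MvPolynomial

lemma polyA {K : Type} [Field K] {n : ℕ} (F : Finset (Fin n))
    (p : MvPolynomial (Fin n) K)
    (hmem : p ∈ Ideal.span (X '' (F : Set (Fin n)) : Set (MvPolynomial (Fin n) K)))
    (hsupp : ∀ b ∈ p.support, ∀ j ∈ F, b j = 0) : p = 0 := by
  classical
  rw [mem_ideal_span_X_image] at hmem
  ext b
  rw [coeff_zero]
  by_cases hb : b ∈ p.support
  · obtain ⟨j, hj, hne⟩ := hmem b hb
    exact absurd (hsupp b hb j hj) hne
  · exact notMem_support_iff.mp hb

theorem stmt9 (K : Type) [Field K] (n r : ℕ)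
    (M : Type) [AddCommGroup M] [Module K M]
    [Module (MvPolynomial (Fin n) K) M]
    [IsScalarTower K (MvPolynomial (Fin n) K) M]
    (ℳ : (Fin n →₀ ℤ) → Submodule K M)
    (hdecomp : DirectSum.IsInternal ℳ)
    (hcompat : ∀ (a : Fin n →₀ ℤ) (i : Fin n), ∀ m ∈ ℳ a,
        (X i : MvPolynomial (Fin n) K) • m ∈ ℳ (a + Finsupp.single i 1))
    (hfg : Module.Finite (MvPolynomial (Fin n) K) M)
    (M_ : Fin (r + 1) → Submodule (MvPolynomial (Fin n) K) M)
    (F : Fin r → Finset (Fin n)) (a : Fin r → (Fin n →₀ ℤ)) (m : Fin r → M)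
    (hbot : M_ 0 = ⊥) (htop : M_ (Fin.last r) = ⊤)
    (hmem : ∀ i : Fin r, m i ∈ M_ i.succ)
    (hhom : ∀ i : Fin r, m i ∈ ℳ (a i))
    (hgen : ∀ i : Fin r,
        M_ i.succ = M_ i.castSucc ⊔ Submodule.span (MvPolynomial (Fin n) K) {m i})
    (hcolon : ∀ i : Fin r,
        {s : MvPolynomial (Fin n) K | s • m i ∈ M_ i.castSucc} =
          (Ideal.span {p | ∃ j ∈ F i, p = (X j : MvPolynomial (Fin n) K)} : Set _)) :
    LinearIndependent K
      (fun p : Σ i : Fin r, {b : Fin n →₀ ℕ // ∀ j ∈ F i, b j = 0} =>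
        (monomial p.2.val (1 : K)) • m p.1) ∧
    Submodule.span K
      {v : M | ∃ (i : Fin r) (b : Fin n →₀ ℕ),
        (∀ j ∈ F i, b j = 0) ∧ v = (monomial b (1 : K)) • m i} = ⊤ := by
  classical
  have hset : ∀ i : Fin r,
      {p | ∃ j ∈ F i, p = (X j : MvPolynomial (Fin n) K)} =
        X '' ((F i : Set (Fin n))) := by
    intro i; ext p
    simp [Set.mem_image, eq_comm]
  -- membership in the colon ideal
  have hcolon' : ∀ i : Fin r, ∀ q : MvPolynomial (Fin n) K,
      q • m i ∈ M_ i.castSucc ↔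
        q ∈ Ideal.span (X '' ((F i : Set (Fin n))) : Set (MvPolynomial (Fin n) K)) := by
    intro i q
    have := hcolon i
    rw [hset i] at this
    constructor
    · intro h; have : q ∈ {s : MvPolynomial (Fin n) K | s • m i ∈ M_ i.castSucc} := h
      rwa [hcolon i, hset i] at this
    · intro h
      have : q ∈ {s : MvPolynomial (Fin n) K | s • m i ∈ M_ i.castSucc} := by
        rw [hcolon i, hset i]; exact h
      exact this
  -- monomials hitting F i push m i down the filtration
  have h1 : ∀ i : Fin r, ∀ b : Fin n →₀ ℕ, (∃ j ∈ F i, b j ≠ 0) →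
      (monomial b (1 : K)) • m i ∈ M_ i.castSucc := by
    intro i b hb
    rw [hcolon' i]
    rw [mem_ideal_span_X_image]
    intro c hc
    rw [support_monomial, if_neg (one_ne_zero)] at hc
    obtain ⟨j, hj, hne⟩ := hb
    simp only [Finset.mem_singleton] at hc
    exact ⟨j, hj, by rwa [hc]⟩
  -- monotonicity of the filtration
  have hmono : ∀ (t : ℕ) (ht : t < r + 1) (s : ℕ) (hs : s ≤ t),
      M_ ⟨s, by omega⟩ ≤ M_ ⟨t, ht⟩ := by
    intro t
    induction t with
    | zero =>
      intro ht s hs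
      have hs0 : s = 0 := by omega
      subst hs0
      exact le_refl _
    | succ t ih =>
      intro ht s hs
      have ht' : t < r := by omega
      have step : M_ ⟨t, by omega⟩ ≤ M_ ⟨t + 1, ht⟩ := by
        have h := hgen ⟨t, ht'⟩
        have h2 : M_ ((⟨t, ht'⟩ : Fin r).castSucc) ≤ M_ ((⟨t, ht'⟩ : Fin r).succ) :=
          h ▸ le_sup_left
        exact h2
      rcases Nat.lt_or_ge s (t + 1) with h | h
      · exact le_trans (ih (by omega) s (by omega)) step
      · have hst : s = t + 1 := by omega
        subst hst
        exact le_refl _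
  have hmemS : ∀ i : Fin r, ∀ q : MvPolynomial (Fin n) K, ∀ k : Fin (r+1),
      (i : ℕ) + 1 ≤ (k : ℕ) → q • m i ∈ M_ k := by
    intro i q k hk
    have h0 := hmono k.val k.isLt (i.val + 1) hk
    have h1 : m i ∈ M_ k := h0 (hmem i)
    exact Submodule.smul_mem _ q h1
  set f : (Σ i : Fin r, {b : Fin n →₀ ℕ // ∀ j ∈ F i, b j = 0}) → M :=
      fun p => (monomial p.2.val (1 : K)) • m p.1 with hf
  set V : Submodule K M := Submodule.span K
      {v : M | ∃ (i : Fin r) (b : Fin n →₀ ℕ),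
        (∀ j ∈ F i, b j = 0) ∧ v = (monomial b (1 : K)) • m i} with hV
  -- spanning, by induction up the filtration
  have hspan : ∀ (t : ℕ) (ht : t ≤ r),
      (M_ ⟨t, lt_of_le_of_lt ht (Nat.lt_succ_self r)⟩ : Set M) ⊆ (V : Set M) := by
    intro t
    induction t with
    | zero =>
      intro _ x hx
      have h00 : (⟨0, Nat.lt_succ_of_le (Nat.zero_le r)⟩ : Fin (r+1)) = 0 := Fin.mk_zero
      rw [h00, hbot] at hx
      have hx0 : x = 0 := by simpa using hx
      rw [hx0]; exact V.zero_mem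
    | succ t ih =>
      intro ht x hx
      have ht' : t < r := ht
      set i : Fin r := ⟨t, ht'⟩ with hi
      have hx' : x ∈ M_ i.castSucc ⊔ Submodule.span (MvPolynomial (Fin n) K) {m i} := by
        rw [← hgen i]; exact hx
      clear hx
      rcases Submodule.mem_sup.mp hx' with ⟨y, hy, z, hz, rfl⟩
      have hyV : y ∈ V := by
        have hcast : i.castSucc = ⟨t, Nat.lt_succ_of_lt ht'⟩ := rfl
        exact ih (le_of_lt ht') (by rw [hcast] at hy; exact hy)
      rcases Submodule.mem_span_singleton.mp hz with ⟨q, rfl⟩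
      refine V.add_mem hyV ?_
      -- show q • m i ∈ V by induction on q
      clear hz hx'
      induction q using MvPolynomial.induction_on' with
      | monomial b c =>
        have : (monomial b c) • m i = c • ((monomial b (1 : K)) • m i) := by
          rw [← smul_assoc, smul_monomial, smul_eq_mul, mul_one]
        rw [this]
        refine V.smul_mem c ?_
        by_cases hbF : ∀ j ∈ F i, b j = 0
        · exact Submodule.subset_span ⟨i, b, hbF, rfl⟩
        · push_neg at hbF
          have := h1 i b hbF
          have hcast : i.castSucc = ⟨t, Nat.lt_succ_of_lt ht'⟩ := rfl
          rw [hcast] at this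
          exact ih (le_of_lt ht') this
      | add p q hp hq =>
        rw [add_smul]
        exact V.add_mem hp hq
  constructor
  · -- linear independence
    rw [linearIndependent_iff]
    suffices H : ∀ (t : ℕ), t ≤ r → ∀ l : (Σ i : Fin r, {b : Fin n →₀ ℕ // ∀ j ∈ F i, b j = 0}) →₀ K,
        (∀ p ∈ l.support, (p.1 : ℕ) < t) → Finsupp.linearCombination K f l = 0 → l = 0 by
      intro l hl
      exact H r le_rfl l (fun p _ => p.1.isLt) hl
    intro t
    induction t with
    | zero =>
      intro _ l hl _
      ext p
      by_contra hne
      have : p ∈ l.support := Finsupp.mem_support_iff.mpr (by simpa using hne)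
      exact absurd (hl p this) (Nat.not_lt_zero _)
    | succ t ih =>
      intro ht l hl htot
      have ht' : t < r := ht
      set i : Fin r := ⟨t, ht'⟩ with hi
      classical
      set s₁ := l.support.filter (fun p => (p.1 : ℕ) < t) with hs₁
      set s₂ := l.support.filter (fun p => ¬ (p.1 : ℕ) < t) with hs₂
      have hsplit : ∑ p ∈ s₁, l p • f p + ∑ p ∈ s₂, l p • f p = 0 := by
        rw [hs₁, hs₂, Finset.sum_filter_add_sum_filter_not]
        rw [Finsupp.linearCombination_apply] at htot
        exact htot
      have hfirst : ∀ p ∈ s₂, p.1 = i := by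
        intro p hp
        rw [hs₂, Finset.mem_filter] at hp
        have h1 := hl p hp.1
        have h2 := hp.2
        exact Fin.ext (show (p.1 : ℕ) = t by omega)
      -- the polynomial q
      set q : MvPolynomial (Fin n) K := ∑ p ∈ s₂, monomial p.2.val (l p) with hq
      have hsum2 : ∑ p ∈ s₂, l p • f p = q • m i := by
        rw [hq, Finset.sum_smul]
        refine Finset.sum_congr rfl ?_
        intro p hp
        calc l p • f p = l p • ((monomial p.2.val) (1 : K) • m p.1) := rfl
          _ = (monomial p.2.val (l p)) • m p.1 := by
              rw [← smul_assoc, smul_monomial, smul_eq_mul, mul_one]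
          _ = (monomial p.2.val (l p)) • m i := by
              rw [show m p.1 = m i from congrArg m (hfirst p hp)]
      have hsum1 : ∑ p ∈ s₁, l p • f p ∈ M_ ⟨t, Nat.lt_succ_of_lt ht'⟩ := by
        refine Submodule.sum_mem _ ?_
        intro p hp
        rw [hs₁, Finset.mem_filter] at hp
        have hfp : f p ∈ M_ ⟨t, Nat.lt_succ_of_lt ht'⟩ := by
          refine hmemS p.1 _ _ ?_
          exact Nat.succ_le_of_lt hp.2
        have : l p • f p = (algebraMap K (MvPolynomial (Fin n) K) (l p)) • f p := by
          rw [algebraMap_smul]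
        rw [this]
        exact Submodule.smul_mem _ _ hfp
      have hqmem : q • m i ∈ M_ i.castSucc := by
        have hcast : i.castSucc = ⟨t, Nat.lt_succ_of_lt ht'⟩ := rfl
        rw [hcast]
        have : q • m i = - ∑ p ∈ s₁, l p • f p := by
          rw [← hsum2]; exact eq_neg_of_add_eq_zero_right hsplit
        rw [this]
        exact Submodule.neg_mem _ hsum1
      have hqzero : q = 0 := by
        refine polyA (F i) q ((hcolon' i q).mp hqmem) ?_
        intro b hb j hj
        have hcb : coeff b q ≠ 0 := by
          rwa [MvPolynomial.mem_support_iff] at hb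
        rw [hq, coeff_sum] at hcb
        obtain ⟨p, hp, hpne⟩ := Finset.exists_ne_zero_of_sum_ne_zero hcb
        rw [coeff_monomial] at hpne
        have hbq : p.2.val = b := by
          by_contra h
          exact hpne (if_neg h)
        rw [← hbq]
        exact p.2.2 j (by rw [hfirst p hp]; exact hj)
      have hs₂empty : s₂ = ∅ := by
        rw [Finset.eq_empty_iff_forall_notMem]
        rintro ⟨pi, pb⟩ hp
        have hpl : (⟨pi, pb⟩ : Σ i : Fin r, {b : Fin n →₀ ℕ // ∀ j ∈ F i, b j = 0}) ∈ l.support :=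
          (Finset.mem_filter.mp (hs₂ ▸ hp)).1
        have hlp : l ⟨pi, pb⟩ ≠ 0 := Finsupp.mem_support_iff.mp hpl
        apply hlp
        have hco : coeff pb.val q = l ⟨pi, pb⟩ := by
          rw [hq, coeff_sum]
          rw [Finset.sum_eq_single (⟨pi, pb⟩ : Σ i : Fin r, {b : Fin n →₀ ℕ // ∀ j ∈ F i, b j = 0})]
          · rw [coeff_monomial, if_pos rfl]
          · rintro ⟨pi', pb'⟩ hp' hne
            rw [coeff_monomial]
            refine if_neg ?_
            intro heq
            apply hne
            have e1 := hfirst ⟨pi', pb'⟩ hp'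
            have e2 := hfirst ⟨pi, pb⟩ hp
            simp only at e1 e2
            have h1 : pi' = pi := by rw [e1, e2]
            subst h1
            have h2 : pb' = pb := Subtype.ext heq
            rw [h2]
          · intro h; exact absurd hp h
        rw [hqzero, coeff_zero] at hco
        exact hco.symm
      have : ∀ p ∈ l.support, (p.1 : ℕ) < t := by
        intro p hp
        by_contra h
        have : p ∈ s₂ := Finset.mem_filter.mpr ⟨hp, h⟩
        rw [hs₂empty] at this
        exact absurd this (Finset.notMem_empty p)
      exact ih (le_of_lt ht') l this htot
  · -- spanning
    rw [eq_top_iff]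
    intro x _
    have hx : x ∈ M_ (Fin.last r) := htop ▸ Submodule.mem_top
    have hlast : (Fin.last r) = ⟨r, Nat.lt_succ_self r⟩ := rfl
    exact hspan r le_rfl (by rw [hlast] at hx; exact hx)
end

section
/- A finitely generated ℕ^n-graded S-module M has a squarefree Stanley decomposition if and only if M is a squarefree S-module. -/
open MvPolynomial DirectSum

namespace SF10

variable {K : Type} [Field K] {n : ℕ}
    {M : Type} [AddCommGroup M] [Module K M]
    [Module (MvPolynomial (Fin n) K) M]
    [IsScalarTower K (MvPolynomial (Fin n) K) M]
    {ℳ : (Fin n →₀ ℕ) → Submodule K M}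

/-- projection onto the degree-c component -/
noncomputable def proj (hdecomp : DirectSum.IsInternal ℳ) (c : Fin n →₀ ℕ) : M →ₗ[K] M :=
  (ℳ c).subtype ∘ₗ (DirectSum.component K (Fin n →₀ ℕ) (fun d => ℳ d) c) ∘ₗ
    (LinearEquiv.ofBijective (DirectSum.coeLinearMap ℳ) hdecomp).symm.toLinearMap

variable (hdecomp : DirectSum.IsInternal ℳ)

theorem proj_mem (c : Fin n →₀ ℕ) (x : M) : proj hdecomp c x ∈ ℳ c :=
  ((DirectSum.component K (Fin n →₀ ℕ) (fun d => ℳ d) c)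
    ((LinearEquiv.ofBijective (DirectSum.coeLinearMap ℳ) hdecomp).symm x)).2

theorem proj_of_mem {c d : Fin n →₀ ℕ} {x : M} (hx : x ∈ ℳ d) :
    proj hdecomp c x = if h : d = c then x else 0 := by
  have h1 : (LinearEquiv.ofBijective (DirectSum.coeLinearMap ℳ) hdecomp).symm x
      = DirectSum.lof K (Fin n →₀ ℕ) (fun d => ℳ d) d ⟨x, hx⟩ := by
    apply (LinearEquiv.ofBijective (DirectSum.coeLinearMap ℳ) hdecomp).injective
    simp only [LinearEquiv.apply_symm_apply]
    have : (LinearEquiv.ofBijective (DirectSum.coeLinearMap ℳ) hdecomp)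
        (DirectSum.lof K (Fin n →₀ ℕ) (fun d => ℳ d) d ⟨x, hx⟩)
        = DirectSum.coeLinearMap ℳ (DirectSum.of (fun d => ↥(ℳ d)) d ⟨x, hx⟩) := rfl
    rw [this, DirectSum.coeLinearMap_of]
  unfold proj
  simp only [LinearMap.coe_comp, Function.comp_apply, LinearEquiv.coe_coe, h1]
  rw [DirectSum.component.of]
  split
  · rename_i h; subst h; rfl
  · rfl

theorem proj_self {c : Fin n →₀ ℕ} {x : M} (hx : x ∈ ℳ c) : proj hdecomp c x = x := by
  rw [proj_of_mem hdecomp hx]; simp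

theorem proj_ne {c d : Fin n →₀ ℕ} {x : M} (hx : x ∈ ℳ d) (hdc : d ≠ c) :
    proj hdecomp c x = 0 := by
  rw [proj_of_mem hdecomp hx]; simp [hdc]

include hdecomp in
/-- extensionality: two K-linear maps agreeing on each component agree -/
theorem ext_of_homogeneous {M' : Type*} [AddCommGroup M'] [Module K M']
    (f g : M →ₗ[K] M') (h : ∀ c, ∀ x ∈ ℳ c, f x = g x) : f = g := by
  ext x
  classical
  obtain ⟨w, rfl⟩ := hdecomp.2 x
  rw [← DirectSum.sum_support_of w]
  simp only [map_sum]
  refine Finset.sum_congr rfl (fun c _ => ?_)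
  rw [DirectSum.coeAddMonoidHom_of]
  exact h c _ (w c).2



/-- squarefree vector attached to a subset -/
noncomputable def sq (s : Finset (Fin n)) : Fin n →₀ ℕ := ∑ i ∈ s, Finsupp.single i 1

theorem sq_apply (s : Finset (Fin n)) (j : Fin n) :
    sq s j = if j ∈ s then 1 else 0 := by
  classical
  rw [sq, Finset.sum_apply']
  simp [Finsupp.single_apply]

theorem sq_le_one (s : Finset (Fin n)) (j : Fin n) : sq s j ≤ 1 := by
  rw [sq_apply]; split <;> omega

theorem sq_support (s : Finset (Fin n)) : (sq s).support = s := by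
  ext j; simp [Finsupp.mem_support_iff, sq_apply]

theorem sq_insert {s : Finset (Fin n)} {j : Fin n} (hj : j ∉ s) :
    sq (insert j s) = sq s + Finsupp.single j 1 := by
  rw [sq, sq, Finset.sum_insert hj, add_comm]

theorem eq_sq_support {b : Fin n →₀ ℕ} (hb : ∀ j, b j ≤ 1) : sq b.support = b := by
  ext j
  rw [sq_apply]
  by_cases h : j ∈ b.support
  · have := Finsupp.mem_support_iff.1 h
    have := hb j
    simp [h]; omega
  · have := Finsupp.notMem_support_iff.1 h
    simp [h]; omega


theorem sub_single_add {b : Fin n →₀ ℕ} {i : Fin n} (h : 0 < b i) :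
    (b - Finsupp.single i 1) + Finsupp.single i 1 = b := by
  ext j
  simp only [Finsupp.add_apply, Finsupp.tsub_apply, Finsupp.single_apply]
  rcases eq_or_ne i j with rfl | hij
  · simp; omega
  · simp [hij]

theorem sum_sub_single {b : Fin n →₀ ℕ} {i : Fin n} (h : 0 < b i) :
    (b - Finsupp.single i 1).sum (fun _ k => k) + 1 = b.sum (fun _ k => k) := by
  classical
  have : b = (b - Finsupp.single i 1) + Finsupp.single i 1 := (sub_single_add h).symm
  conv_rhs => rw [this]
  rw [Finsupp.sum_add_index (by intros; rfl) (by intros; rfl)]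
  simp

theorem monomial_smul_smul (b b' : Fin n →₀ ℕ) (x : M) :
    (monomial b (1:K)) • ((monomial b' (1:K)) • x) = (monomial (b + b') (1:K)) • x := by
  rw [← mul_smul, monomial_mul, one_mul]

theorem X_smul_monomial_smul (i : Fin n) (b : Fin n →₀ ℕ) (x : M) :
    (X i : MvPolynomial (Fin n) K) • ((monomial b (1:K)) • x)
      = (monomial (b + Finsupp.single i 1) (1:K)) • x := by
  have : (X i : MvPolynomial (Fin n) K) = monomial (Finsupp.single i 1) 1 := rfl
  rw [this, monomial_smul_smul, add_comm]

theorem monomial_zero_smul (x : M) : (monomial (0 : Fin n →₀ ℕ) (1:K)) • x = x := by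
  have : (monomial (0 : Fin n →₀ ℕ) (1:K)) = 1 := by simp
  rw [this, one_smul]

theorem C_smul (k : K) (x : M) : (C k : MvPolynomial (Fin n) K) • x = k • x := by
  rw [← MvPolynomial.algebraMap_eq, algebraMap_smul]

variable (hcompat : ∀ (a : Fin n →₀ ℕ) (i : Fin n), ∀ m ∈ ℳ a,
    (X i : MvPolynomial (Fin n) K) • m ∈ ℳ (a + Finsupp.single i 1))

include hcompat in
theorem monomial_smul_mem (b : Fin n →₀ ℕ) {c : Fin n →₀ ℕ} {x : M} (hx : x ∈ ℳ c) :
    (monomial b (1:K)) • x ∈ ℳ (c + b) := by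
  classical
  suffices H : ∀ (N : ℕ) (b : Fin n →₀ ℕ), b.sum (fun _ k => k) = N →
      ∀ (c : Fin n →₀ ℕ) (x : M), x ∈ ℳ c → (monomial b (1:K)) • x ∈ ℳ (c + b) from
    H _ b rfl c x hx
  intro N
  induction N using Nat.strong_induction_on with
  | _ N ih =>
    intro b hb c x hx
    rcases eq_or_ne b 0 with rfl | hb0
    · rw [monomial_zero_smul]; simpa using hx
    · obtain ⟨i, hi⟩ := Finsupp.support_nonempty_iff.2 hb0
      have hbi : 0 < b i := Nat.pos_of_ne_zero (Finsupp.mem_support_iff.1 hi)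
      have key : (monomial b (1:K)) • x
          = (X i : MvPolynomial (Fin n) K) • ((monomial (b - Finsupp.single i 1) (1:K)) • x) := by
        rw [X_smul_monomial_smul, sub_single_add hbi]
      have hsum : (b - Finsupp.single i 1).sum (fun _ k => k) < N := by
        have := sum_sub_single (b := b) (i := i) hbi; omega
      have hmem := ih _ hsum (b - Finsupp.single i 1) rfl c x hx
      have := hcompat _ i _ hmem
      rw [key]
      have harith : (c + (b - Finsupp.single i 1)) + Finsupp.single i 1 = c + b := by
        rw [add_assoc, sub_single_add hbi]
      rwa [harith] at this



variable (hsf : ∀ (c : Fin n →₀ ℕ) (i : Fin n), 0 < c i →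
    Function.Bijective (fun x : ℳ c =>
      (⟨(X i : MvPolynomial (Fin n) K) • (x : M), hcompat c i x x.2⟩ :
        ℳ (c + Finsupp.single i 1))))

include hcompat hsf in
theorem smul_eq_zero_of_mem {c : Fin n →₀ ℕ} {i : Fin n} (hci : 0 < c i) {x : M}
    (hx : x ∈ ℳ c) (h0 : (X i : MvPolynomial (Fin n) K) • x = 0) : x = 0 := by
  have h1 : (fun y : ℳ c => (⟨(X i : MvPolynomial (Fin n) K) • (y : M),
      hcompat c i y y.2⟩ : ℳ (c + Finsupp.single i 1))) ⟨x, hx⟩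
      = (fun y : ℳ c => (⟨(X i : MvPolynomial (Fin n) K) • (y : M),
      hcompat c i y y.2⟩ : ℳ (c + Finsupp.single i 1))) 0 := by
    apply Subtype.ext
    simp only [Submodule.coe_zero, smul_zero]
    exact h0
  have := (hsf c i hci).1 h1
  exact congrArg Subtype.val this

include hcompat hsf in
theorem surj_step {c : Fin n →₀ ℕ} {i : Fin n} (hci : 0 < c i) {y : M}
    (hy : y ∈ ℳ (c + Finsupp.single i 1)) :
    ∃ x ∈ ℳ c, (X i : MvPolynomial (Fin n) K) • x = y := by
  obtain ⟨x, hx⟩ := (hsf c i hci).2 ⟨y, hy⟩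
  exact ⟨x.1, x.2, congrArg Subtype.val hx⟩

include hcompat hsf in
theorem comp_eq_bot_of_sq (hbot : ∀ s : Finset (Fin n), ℳ (sq s) = ⊥) :
    ∀ b, ℳ b = ⊥ := by
  classical
  suffices H : ∀ (N : ℕ) (b : Fin n →₀ ℕ), b.sum (fun _ k => k) = N → ℳ b = ⊥ from
    fun b => H _ b rfl
  intro N
  induction N using Nat.strong_induction_on with
  | _ N ih =>
    intro b hbN
    by_cases hb1 : ∀ j, b j ≤ 1
    · rw [← eq_sq_support hb1]; exact hbot _
    · push_neg at hb1
      obtain ⟨j, hj⟩ := hb1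
      have hj2 : 2 ≤ b j := hj
      have hpos : 0 < (b - Finsupp.single j 1 : Fin n →₀ ℕ) j := by
        rw [Finsupp.tsub_apply, Finsupp.single_eq_same]; omega
      have hlt : (b - Finsupp.single j 1).sum (fun _ k => k) < N := by
        have := sum_sub_single (b := b) (i := j) (by omega); omega
      have hprev : ℳ (b - Finsupp.single j 1) = ⊥ := ih _ hlt _ rfl
      rw [eq_bot_iff]
      intro y hy
      have hy' : y ∈ ℳ ((b - Finsupp.single j 1) + Finsupp.single j 1) := by
        rwa [sub_single_add (by omega : 0 < b j)]
      obtain ⟨x, hx, hxy⟩ := surj_step hcompat hsf hpos hy'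
      have : x = 0 := by rw [hprev] at hx; simpa using hx
      simp only [this, smul_zero] at hxy
      simp [← hxy]

include hcompat hsf in
theorem monomial_smul_ne_zero {s : Finset (Fin n)} {m : M} (hm : m ∈ ℳ (sq s))
    (hm0 : m ≠ 0) : ∀ (b : Fin n →₀ ℕ), ↑b.support ⊆ (s : Set (Fin n)) →
      (monomial b (1 : K)) • m ≠ 0 := by
  classical
  suffices H : ∀ (N : ℕ) (b : Fin n →₀ ℕ), b.sum (fun _ k => k) = N →
      ↑b.support ⊆ (s : Set (Fin n)) → (monomial b (1 : K)) • m ≠ 0 from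
    fun b hb => H _ b rfl hb
  intro N
  induction N using Nat.strong_induction_on with
  | _ N ih =>
    intro b hbN hbs
    rcases eq_or_ne b 0 with rfl | hb0
    · rw [monomial_zero_smul]; exact hm0
    · obtain ⟨i, hi⟩ := Finsupp.support_nonempty_iff.2 hb0
      have hbi : 0 < b i := Nat.pos_of_ne_zero (Finsupp.mem_support_iff.1 hi)
      have his : i ∈ s := hbs hi
      have hb's : ↑(b - Finsupp.single i 1).support ⊆ (s : Set (Fin n)) :=
        fun x hx => hbs (Finsupp.support_tsub hx)
      have hlt : (b - Finsupp.single i 1).sum (fun _ k => k) < N := by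
        have := sum_sub_single (b := b) (i := i) hbi; omega
      have hne := ih _ hlt _ rfl hb's
      have hmem : (monomial (b - Finsupp.single i 1) (1:K)) • m
          ∈ ℳ (sq s + (b - Finsupp.single i 1)) :=
        monomial_smul_mem hcompat _ hm
      have hcpos : 0 < (sq s + (b - Finsupp.single i 1) : Fin n →₀ ℕ) i := by
        rw [Finsupp.add_apply, sq_apply]
        simp [his]
      intro hzero
      apply hne
      apply smul_eq_zero_of_mem hcompat hsf hcpos hmem
      rw [X_smul_monomial_smul, sub_single_add hbi]
      exact hzero

theorem forward_dir
    (hdecomp : DirectSum.IsInternal ℳ)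
    (hcompat : ∀ (a : Fin n →₀ ℕ) (i : Fin n), ∀ m ∈ ℳ a,
        (X i : MvPolynomial (Fin n) K) • m ∈ ℳ (a + Finsupp.single i 1))
    (t : ℕ) (m : Fin t → M) (Z : Fin t → Finset (Fin n)) (a : Fin t → (Fin n →₀ ℕ))
    (hm : ∀ i, m i ∈ ℳ (a i))
    (hsq : ∀ i j, a i j ≤ 1)
    (hsupp : ∀ i, (a i).support ⊆ Z i)
    (hli : LinearIndependent K
        (fun p : Σ i : Fin t, {b : Fin n →₀ ℕ // ↑b.support ⊆ (Z i : Set (Fin n))} =>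
          (monomial p.2.val (1 : K)) • m p.1))
    (hspan : Submodule.span K
        {v : M | ∃ (i : Fin t) (b : Fin n →₀ ℕ),
          ↑b.support ⊆ (Z i : Set (Fin n)) ∧ v = (monomial b (1 : K)) • m i} = ⊤)
    (c : Fin n →₀ ℕ) (i : Fin n) (hci : 0 < c i) :
    Function.Bijective (fun x : ℳ c =>
        (⟨(X i : MvPolynomial (Fin n) K) • (x : M), hcompat c i x x.2⟩ :
          ℳ (c + Finsupp.single i 1))) := by
  classical
  set I := (Σ i : Fin t, {b : Fin n →₀ ℕ // ↑b.support ⊆ (Z i : Set (Fin n))}) with hI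
  set v : I → M := fun p => (monomial p.2.val (1 : K)) • m p.1 with hv
  set deg : I → (Fin n →₀ ℕ) := fun p => a p.1 + p.2.val with hdeg
  have hvmem : ∀ p : I, v p ∈ ℳ (deg p) := fun p =>
    monomial_smul_mem hcompat p.2.val (hm p.1)
  have hrange : {x : M | ∃ (i : Fin t) (b : Fin n →₀ ℕ),
      ↑b.support ⊆ (Z i : Set (Fin n)) ∧ x = (monomial b (1 : K)) • m i} = Set.range v := by
    ext x
    constructor
    · rintro ⟨j, b, hb, rfl⟩; exact ⟨⟨j, ⟨b, hb⟩⟩, rfl⟩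
    · rintro ⟨⟨j, b⟩, rfl⟩; exact ⟨j, b.val, b.2, rfl⟩
  -- spanning of each component
  have hcomp_span : ∀ (d : Fin n →₀ ℕ) (x : M), x ∈ ℳ d →
      x ∈ Submodule.span K (Set.range (fun q : {p : I // deg p = d} => v q.1)) := by
    intro d x hx
    have hx1 : x ∈ Submodule.span K (Set.range v) := by
      rw [← hrange, hspan]; trivial
    have hx2 : proj hdecomp d x ∈ (Submodule.span K (Set.range v)).map (proj hdecomp d) :=
      Submodule.mem_map_of_mem hx1
    rw [Submodule.map_span] at hx2
    rw [proj_self hdecomp hx] at hx2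
    refine Submodule.span_le.2 ?_ hx2
    rintro y ⟨z, ⟨p, rfl⟩, rfl⟩
    by_cases hp : deg p = d
    · rw [proj_self hdecomp (by rw [← hp] at *; exact hvmem p)]
      exact Submodule.subset_span ⟨⟨p, hp⟩, rfl⟩
    · rw [proj_ne hdecomp (hvmem p) hp]
      exact Submodule.zero_mem _
  -- commuting K-scalars with S-scalars
  have hcomm : ∀ (p : MvPolynomial (Fin n) K) (k : K) (z : M), p • (k • z) = k • (p • z) := by
    intro p k z
    exact smul_comm p k z
  -- the shift map on indices
  have hZmem : ∀ (p : I), deg p = c →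
      (↑(p.2.val + Finsupp.single i 1).support : Set (Fin n)) ⊆ ↑(Z p.1) := by
    rintro ⟨j, b, hb⟩ hdp
    intro x hx
    have hbx : (b + Finsupp.single i 1 : Fin n →₀ ℕ) x ≠ 0 := Finsupp.mem_support_iff.1 hx
    have hdpx : (a j) x + b x = c x := by
      have := DFunLike.congr_fun hdp x
      simpa [deg, Finsupp.add_apply] using this
    rcases eq_or_ne x i with rfl | hxi
    · by_cases hbi : b x = 0
      · have hax : (a j) x ≠ 0 := by omega
        exact hsupp j (Finsupp.mem_support_iff.2 hax)
      · exact hb (Finsupp.mem_support_iff.2 hbi)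
    · have hbx' : b x ≠ 0 := by
        simpa [Finsupp.add_apply, Finsupp.single_apply, (Ne.symm hxi)] using hbx
      exact hb (Finsupp.mem_support_iff.2 hbx')
  set σ : {p : I // deg p = c} → I :=
    fun q => ⟨q.1.1, ⟨q.1.2.val + Finsupp.single i 1, hZmem q.1 q.2⟩⟩ with hσ
  have hXv : ∀ q : {p : I // deg p = c},
      (X i : MvPolynomial (Fin n) K) • v q.1 = v (σ q) := by
    intro q
    simp only [hv, hσ]
    rw [X_smul_monomial_smul]
  have hσinj : Function.Injective σ := by
    rintro ⟨⟨j, b, hb⟩, hq⟩ ⟨⟨j', b', hb'⟩, hq'⟩ h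
    simp only [hσ] at h
    obtain ⟨h1, h2⟩ := Sigma.mk.inj_iff.1 h
    subst h1
    have h4 : b + Finsupp.single i 1 = b' + Finsupp.single i 1 :=
      congrArg Subtype.val (eq_of_heq h2)
    have h5 : b = b' := add_right_cancel h4
    subst h5
    rfl
  constructor
  · -- injectivity
    have key : ∀ u ∈ ℳ c, (X i : MvPolynomial (Fin n) K) • u = 0 → u = 0 := by
      intro u hu h0
      have hspan' := hcomp_span c u hu
      rw [Finsupp.mem_span_range_iff_exists_finsupp] at hspan'
      obtain ⟨l, hl⟩ := hspan'
      have h2 : Finsupp.linearCombination K (v ∘ σ) l = 0 := by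
        rw [Finsupp.linearCombination_apply]
        have heq : (l.sum fun q k => k • (v ∘ σ) q)
            = (X i : MvPolynomial (Fin n) K) • l.sum (fun q k => k • v q.1) := by
          rw [Finsupp.smul_sum]
          apply Finsupp.sum_congr
          intro q _
          rw [hcomm, hXv q]
          rfl
        rw [heq, hl, h0]
      have hl0 : l = 0 := linearIndependent_iff.1 (hli.comp σ hσinj) l h2
      rw [hl0, Finsupp.sum_zero_index] at hl
      exact hl.symm
    intro x y hxy
    have hxy' : (X i : MvPolynomial (Fin n) K) • ((x : M) - (y : M)) = 0 := by
      have h := congrArg Subtype.val hxy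
      simp only at h
      rw [smul_sub, h, sub_self]
    have h0 : (x : M) - (y : M) = 0 := key _ (sub_mem x.2 y.2) hxy'
    exact Subtype.ext (sub_eq_zero.1 h0)
  · -- surjectivity
    rintro ⟨y, hy⟩
    have hspan' := hcomp_span (c + Finsupp.single i 1) y hy
    rw [Finsupp.mem_span_range_iff_exists_finsupp] at hspan'
    obtain ⟨l, hl⟩ := hspan'
    set ρ : {p : I // deg p = c + Finsupp.single i 1} → I :=
      fun q => ⟨q.1.1, ⟨q.1.2.val - Finsupp.single i 1, by
        intro x hx
        exact q.1.2.2 (Finsupp.support_tsub hx)⟩⟩ with hρ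
    have hbi : ∀ q : {p : I // deg p = c + Finsupp.single i 1}, 0 < q.1.2.val i := by
      rintro ⟨⟨j, b, hb⟩, hq⟩
      have h1 := DFunLike.congr_fun hq i
      simp only [deg, Finsupp.add_apply, Finsupp.single_eq_same] at h1
      have h2 := hsq j i
      simp only
      omega
    have hρdeg : ∀ q : {p : I // deg p = c + Finsupp.single i 1}, deg (ρ q) = c := by
      rintro ⟨⟨j, b, hb⟩, hq⟩
      have hbi' : 0 < b i := hbi ⟨⟨j, ⟨b, hb⟩⟩, hq⟩
      ext y'
      have h1 := DFunLike.congr_fun hq y'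
      rcases eq_or_ne i y' with rfl | hiy
      · simp only [deg, hρ, Finsupp.add_apply, Finsupp.tsub_apply, Finsupp.single_eq_same] at h1 ⊢
        omega
      · simp only [deg, hρ, Finsupp.add_apply, Finsupp.tsub_apply,
          Finsupp.single_eq_of_ne' hiy] at h1 ⊢
        omega
    have hρX : ∀ q : {p : I // deg p = c + Finsupp.single i 1},
        (X i : MvPolynomial (Fin n) K) • v (ρ q) = v q.1 := by
      rintro ⟨⟨j, b, hb⟩, hq⟩
      have hbi' : 0 < b i := hbi ⟨⟨j, ⟨b, hb⟩⟩, hq⟩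
      simp only [hv, hρ]
      rw [X_smul_monomial_smul, sub_single_add hbi']
    set x := l.sum (fun q k => k • v (ρ q)) with hx
    have hxmem : x ∈ ℳ c := by
      rw [hx, Finsupp.sum]
      apply Submodule.sum_smul_mem
      intro q _
      have := hvmem (ρ q)
      rwa [hρdeg q] at this
    refine ⟨⟨x, hxmem⟩, Subtype.ext ?_⟩
    simp only [hx]
    rw [Finsupp.smul_sum]
    rw [← hl]
    apply Finsupp.sum_congr
    intro q _
    rw [hcomm, hρX q]

/-- multiplication by `X i` as a `K`-linear map -/
noncomputable def XsmulL (K : Type) [Field K] {n : ℕ} (M : Type) [AddCommGroup M] [Module K M]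
    [Module (MvPolynomial (Fin n) K) M]
    [IsScalarTower K (MvPolynomial (Fin n) K) M] (i : Fin n) : M →ₗ[K] M where
  toFun := fun z => (X i : MvPolynomial (Fin n) K) • z
  map_add' := fun a b => smul_add _ a b
  map_smul' := fun k z => by simp only [RingHom.id_apply]; exact smul_comm _ k z

@[simp] theorem XsmulL_apply (i : Fin n) (z : M) :
    XsmulL K M i z = (X i : MvPolynomial (Fin n) K) • z := rfl

theorem tsub_add_single {b d : Fin n →₀ ℕ} {i : Fin n} (hbi : 0 < b i)
    (hd : d ≤ b - Finsupp.single i 1) :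
    (b - Finsupp.single i 1) - d + Finsupp.single i 1 = b - d := by
  have hd' := Finsupp.le_def.1 hd
  ext j
  have h1 := hd' j
  rcases eq_or_ne i j with rfl | hij
  · simp only [Finsupp.add_apply, Finsupp.tsub_apply, Finsupp.single_eq_same] at *
    omega
  · simp only [Finsupp.add_apply, Finsupp.tsub_apply, Finsupp.single_eq_of_ne' hij] at *
    omega

include hdecomp hcompat in
theorem proj_X_smul (i : Fin n) (c : Fin n →₀ ℕ) (x : M) :
    proj hdecomp c ((X i : MvPolynomial (Fin n) K) • x)
      = if 0 < c i then (X i : MvPolynomial (Fin n) K) •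
          proj hdecomp (c - Finsupp.single i 1) x else 0 := by
  have key : (proj hdecomp c) ∘ₗ XsmulL K M i
      = (if 0 < c i then (XsmulL K M i) ∘ₗ proj hdecomp (c - Finsupp.single i 1)
          else (0 : M →ₗ[K] M)) := by
    apply ext_of_homogeneous hdecomp
    intro c' y hy
    have hXy : (X i : MvPolynomial (Fin n) K) • y ∈ ℳ (c' + Finsupp.single i 1) :=
      hcompat _ _ _ hy
    simp only [LinearMap.coe_comp, Function.comp_apply, XsmulL_apply]
    rw [proj_of_mem hdecomp hXy]
    by_cases hci : 0 < c i
    · rw [if_pos hci]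
      simp only [LinearMap.coe_comp, Function.comp_apply, XsmulL_apply]
      rw [proj_of_mem hdecomp hy]
      by_cases h1 : c' + Finsupp.single i 1 = c
      · rw [dif_pos h1]
        have h2 : c' = c - Finsupp.single i 1 := by
          rw [← h1]; ext j
          simp only [Finsupp.add_apply, Finsupp.tsub_apply, Finsupp.single_apply]
          split <;> omega
        rw [dif_pos h2]
      · rw [dif_neg h1]
        have h2 : ¬ (c' = c - Finsupp.single i 1) := by
          intro h3
          apply h1
          rw [h3, sub_single_add hci]
        rw [dif_neg h2, smul_zero]
    · rw [if_neg hci]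
      have h1 : ¬ (c' + Finsupp.single i 1 = c) := by
        intro h2
        apply hci
        have := DFunLike.congr_fun h2 i
        simp only [Finsupp.add_apply, Finsupp.single_eq_same] at this
        omega
      rw [dif_neg h1]
      rfl
  have := DFunLike.congr_fun key x
  simp only [LinearMap.coe_comp, Function.comp_apply, XsmulL_apply] at this
  rw [this]
  split_ifs with h
  · simp
  · rfl

include hdecomp hcompat in
theorem component_fd [hfg : Module.Finite (MvPolynomial (Fin n) K) M] (b : Fin n →₀ ℕ) :
    FiniteDimensional K (ℳ b) := by
  classical
  obtain ⟨G, hGfin, hGspan⟩ := Submodule.fg_def.1 (Module.finite_def.1 hfg)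
  set w : M → (⨁ c, ℳ c) :=
    fun x => (LinearEquiv.ofBijective (DirectSum.coeLinearMap ℳ) hdecomp).symm x with hw
  have hproj : ∀ (x : M) (c : Fin n →₀ ℕ), proj hdecomp c x = ↑(w x c) := fun _ _ => rfl
  set T : Set M := ⋃ g ∈ G, (fun c => proj hdecomp c g) '' ↑(DFinsupp.support (w g)) with hT
  have hTfin : T.Finite :=
    Set.Finite.biUnion hGfin (fun g _ => Set.Finite.image _ (Finset.finite_toSet _))
  have hTex : ∀ x ∈ T, ∃ c, x ∈ ℳ c := by
    intro x hx
    simp only [hT, Set.mem_iUnion, Set.mem_image] at hx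
    obtain ⟨g, _, c, _, rfl⟩ := hx
    exact ⟨c, proj_mem hdecomp c g⟩
  set dgf : M → (Fin n →₀ ℕ) := fun x => if h : ∃ c, x ∈ ℳ c then h.choose else 0 with hdgf
  have hdg : ∀ x ∈ T, x ∈ ℳ (dgf x) := by
    intro x hx
    have h := hTex x hx
    simp only [hdgf, dif_pos h]
    exact h.choose_spec
  -- T spans over S
  have hTspan : (⊤ : Submodule (MvPolynomial (Fin n) K) M)
      ≤ Submodule.span (MvPolynomial (Fin n) K) T := by
    rw [← hGspan]
    rw [Submodule.span_le]
    intro g hg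
    have hgw : (DirectSum.coeAddMonoidHom ℳ) (w g) = g := by
      have := (LinearEquiv.ofBijective (DirectSum.coeLinearMap ℳ) hdecomp).apply_symm_apply g
      exact this
    have hsum : g = ∑ c ∈ DFinsupp.support (w g), ((w g c : M)) := by
      conv_lhs => rw [← hgw, ← DirectSum.sum_support_of (w g)]
      rw [map_sum]
      refine Finset.sum_congr rfl (fun c _ => ?_)
      rw [DirectSum.coeAddMonoidHom_of]
    rw [SetLike.mem_coe, hsum]
    apply Submodule.sum_mem
    intro c hc
    apply Submodule.subset_span
    simp only [hT, Set.mem_iUnion]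
    exact ⟨g, hg, c, hc, (hproj g c).symm⟩
  -- the finite candidate spanning sets
  set Bset : (Fin n →₀ ℕ) → Set M :=
    fun d => (fun h => (monomial (d - dgf h) (1:K)) • h) '' {h ∈ T | dgf h ≤ d} with hB
  have hBfin : ∀ d, (Bset d).Finite :=
    fun d => Set.Finite.image _ (hTfin.subset (Set.sep_subset _ _))
  -- main claim
  have main : ∀ x : M, x ∈ Submodule.span (MvPolynomial (Fin n) K) T →
      ∀ d, proj hdecomp d x ∈ Submodule.span K (Bset d) := by
    intro x hx
    induction hx using Submodule.span_induction with
    | mem y hy =>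
      intro d
      rw [proj_of_mem hdecomp (hdg y hy)]
      by_cases h1 : dgf y = d
      · rw [dif_pos h1]
        apply Submodule.subset_span
        refine ⟨y, ⟨hy, le_of_eq h1⟩, ?_⟩
        show (monomial (d - dgf y) (1:K)) • y = y
        rw [h1, tsub_self]
        exact monomial_zero_smul y
      · rw [dif_neg h1]
        exact Submodule.zero_mem _
    | zero => intro d; rw [map_zero]; exact Submodule.zero_mem _
    | add y z _ _ hy hz => intro d; rw [map_add]; exact Submodule.add_mem _ (hy d) (hz d)
    | smul p y hmem hy =>
      -- inner induction over the polynomial p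
      clear hmem
      revert y
      induction p using MvPolynomial.induction_on with
      | C k =>
        intro y hy d
        rw [C_smul, map_smul]
        exact Submodule.smul_mem _ _ (hy d)
      | add p q hp hq =>
        intro y hy d
        rw [add_smul, map_add]
        exact Submodule.add_mem _ (hp y hy d) (hq y hy d)
      | mul_X p i hp =>
        intro y hy d
        have hXy : ∀ d', proj hdecomp d' ((X i : MvPolynomial (Fin n) K) • y)
            ∈ Submodule.span K (Bset d') := by
          intro d'
          rw [proj_X_smul hdecomp hcompat]
          by_cases hdi : 0 < d' i
          · rw [if_pos hdi]
            have h1 : proj hdecomp (d' - Finsupp.single i 1) y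
                ∈ Submodule.span K (Bset (d' - Finsupp.single i 1)) := hy _
            have h2 : (XsmulL K M i) (proj hdecomp (d' - Finsupp.single i 1) y)
                ∈ Submodule.map (XsmulL K M i) (Submodule.span K (Bset (d' - Finsupp.single i 1))) :=
              Submodule.mem_map_of_mem h1
            rw [Submodule.map_span] at h2
            have h3 : Submodule.span K ((XsmulL K M i) '' (Bset (d' - Finsupp.single i 1)))
                ≤ Submodule.span K (Bset d') := by
              rw [Submodule.span_le]
              rintro z ⟨z', ⟨h', ⟨hh'T, hh'le⟩, rfl⟩, rfl⟩
              apply Submodule.subset_span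
              refine ⟨h', ⟨hh'T, le_trans hh'le tsub_le_self⟩, ?_⟩
              simp only [XsmulL_apply]
              rw [X_smul_monomial_smul, tsub_add_single hdi hh'le]
            exact h3 h2
          · rw [if_neg hdi]
            exact Submodule.zero_mem _
        have := hp ((X i : MvPolynomial (Fin n) K) • y) hXy d
        rwa [mul_smul]
  -- conclude
  have hle : ℳ b ≤ Submodule.span K (Bset b) := by
    intro x hx
    have := main x (hTspan trivial) b
    rwa [proj_self hdecomp hx] at this
  have : FiniteDimensional K (Submodule.span K (Bset b)) :=
    FiniteDimensional.span_of_finite K (hBfin b)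
  exact Submodule.finiteDimensional_of_le hle



/-- index equivalence for extending a Stanley decomposition by one new summand -/
def snocEquiv {n : ℕ} {t' : ℕ} (Z' : Fin t' → Finset (Fin n)) (s : Finset (Fin n)) :
    ((Σ j : Fin t', {b : Fin n →₀ ℕ // ↑b.support ⊆ (Z' j : Set (Fin n))}) ⊕
      {b : Fin n →₀ ℕ // ↑b.support ⊆ (s : Set (Fin n))}) ≃
    (Σ i : Fin (t'+1), {b : Fin n →₀ ℕ //
      ↑b.support ⊆ ((Fin.snoc Z' s : Fin (t'+1) → Finset (Fin n)) i : Set (Fin n))}) where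
  toFun := Sum.elim
    (fun p => ⟨Fin.castSucc p.1, ⟨p.2.val, by
      rw [Fin.snoc_castSucc]; exact p.2.2⟩⟩)
    (fun b => ⟨Fin.last t', ⟨b.val, by
      rw [Fin.snoc_last]; exact b.2⟩⟩)
  invFun := fun p => Fin.lastCases
    (motive := fun j => {b : Fin n →₀ ℕ //
        ↑b.support ⊆ ((Fin.snoc Z' s : Fin (t'+1) → Finset (Fin n)) j : Set (Fin n))} →
      ((Σ j : Fin t', {b : Fin n →₀ ℕ // ↑b.support ⊆ (Z' j : Set (Fin n))}) ⊕
        {b : Fin n →₀ ℕ // ↑b.support ⊆ (s : Set (Fin n))}))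
    (fun b => Sum.inr ⟨b.val, subset_trans b.2 (by rw [Fin.snoc_last])⟩)
    (fun j b => Sum.inl ⟨j, ⟨b.val, subset_trans b.2 (by rw [Fin.snoc_castSucc])⟩⟩)
    p.1 p.2
  left_inv := by
    rintro (⟨j, b⟩ | b)
    · simp only [Sum.elim_inl]
      rw [Fin.lastCases_castSucc]
    · simp only [Sum.elim_inr]
      rw [Fin.lastCases_last]
  right_inv := by
    rintro ⟨i, b⟩
    revert b
    refine Fin.lastCases ?_ ?_ i
    · intro b
      dsimp only
      rw [Fin.lastCases_last]
      rfl
    · intro j b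
      dsimp only
      rw [Fin.lastCases_castSucc]
      rfl

@[simp] theorem snocEquiv_inl {n t' : ℕ} (Z' : Fin t' → Finset (Fin n)) (s : Finset (Fin n))
    (p : Σ j : Fin t', {b : Fin n →₀ ℕ // ↑b.support ⊆ (Z' j : Set (Fin n))}) :
    ((snocEquiv Z' s (Sum.inl p)).1 = Fin.castSucc p.1) ∧
      ((snocEquiv Z' s (Sum.inl p)).2.val = p.2.val) := ⟨rfl, rfl⟩

@[simp] theorem snocEquiv_inr {n t' : ℕ} (Z' : Fin t' → Finset (Fin n)) (s : Finset (Fin n))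
    (b : {b : Fin n →₀ ℕ // ↑b.support ⊆ (s : Set (Fin n))}) :
    ((snocEquiv Z' s (Sum.inr b)).1 = Fin.last t') ∧
      ((snocEquiv Z' s (Sum.inr b)).2.val = b.val) := ⟨rfl, rfl⟩

/-- The squarefree Stanley decomposition predicate -/
def SD (K : Type) [Field K] (n : ℕ) (M : Type) [AddCommGroup M] [Module K M]
    [Module (MvPolynomial (Fin n) K) M]
    [IsScalarTower K (MvPolynomial (Fin n) K) M]
    (ℳ : (Fin n →₀ ℕ) → Submodule K M) : Prop :=
  ∃ (t : ℕ) (m : Fin t → M) (Z : Fin t → Finset (Fin n))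
      (a : Fin t → (Fin n →₀ ℕ)),
    (∀ i, m i ∈ ℳ (a i)) ∧
    (∀ i j, a i j ≤ 1) ∧
    (∀ i, (a i).support ⊆ Z i) ∧
    LinearIndependent K
      (fun p : Σ i : Fin t, {b : Fin n →₀ ℕ // ↑b.support ⊆ (Z i : Set (Fin n))} =>
        (monomial p.2.val (1 : K)) • m p.1) ∧
    Submodule.span K
      {v : M | ∃ (i : Fin t) (b : Fin n →₀ ℕ),
        ↑b.support ⊆ (Z i : Set (Fin n)) ∧ v = (monomial b (1 : K)) • m i} = ⊤

theorem aux (K : Type) [Field K] (n : ℕ) :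
    ∀ (D : ℕ) (M : Type) [AddCommGroup M] [Module K M]
      [Module (MvPolynomial (Fin n) K) M]
      [IsScalarTower K (MvPolynomial (Fin n) K) M]
      (ℳ : (Fin n →₀ ℕ) → Submodule K M)
      (hdecomp : DirectSum.IsInternal ℳ)
      (hcompat : ∀ (a : Fin n →₀ ℕ) (i : Fin n), ∀ m ∈ ℳ a,
        (X i : MvPolynomial (Fin n) K) • m ∈ ℳ (a + Finsupp.single i 1)),
      (∀ (c : Fin n →₀ ℕ) (i : Fin n), 0 < c i →
        Function.Bijective (fun x : ℳ c =>
          (⟨(X i : MvPolynomial (Fin n) K) • (x : M), hcompat c i x x.2⟩ :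
            ℳ (c + Finsupp.single i 1)))) →
      (∀ b, FiniteDimensional K (ℳ b)) →
      (∑ s : Finset (Fin n), Module.finrank K (ℳ (sq s))) = D →
      SD K n M ℳ := by
  intro D
  induction D using Nat.strong_induction_on with
  | _ D ih =>
  intro M _ _ _ _ ℳ hdecomp hcompat hsf hfd hD
  classical
  by_cases hM : ∀ s : Finset (Fin n), ℳ (sq s) = ⊥
  · -- the module is zero
    have hallbot : ∀ b, ℳ b = ⊥ := comp_eq_bot_of_sq hcompat hsf hM
    have hzero : ∀ x : M, x = 0 := by
      intro x
      obtain ⟨w, rfl⟩ := hdecomp.2 x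
      rw [← DirectSum.sum_support_of w, map_sum]
      apply Finset.sum_eq_zero
      intro c _
      rw [DirectSum.coeAddMonoidHom_of]
      exact (Submodule.eq_bot_iff _).1 (hallbot c) _ (w c).2
    refine ⟨0, Fin.elim0, Fin.elim0, Fin.elim0, fun i => i.elim0, fun i => i.elim0,
      fun i => i.elim0, ?_, ?_⟩
    · have : IsEmpty (Σ i : Fin 0, {b : Fin n →₀ ℕ //
          ↑b.support ⊆ ((Fin.elim0 i : Finset (Fin n)) : Set (Fin n))}) :=
        ⟨fun p => p.1.elim0⟩
      exact linearIndependent_empty_type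
    · rw [eq_top_iff]
      intro x _
      rw [hzero x]
      exact Submodule.zero_mem _
  · push_neg at hM
    obtain ⟨s0, hs0⟩ := hM
    have hex : (Finset.univ.filter (fun s : Finset (Fin n) => ℳ (sq s) ≠ ⊥)).Nonempty :=
      ⟨s0, Finset.mem_filter.2 ⟨Finset.mem_univ _, hs0⟩⟩
    obtain ⟨s, hsmem, hsmax⟩ := Finset.exists_max_image _ Finset.card hex
    have hsne : ℳ (sq s) ≠ ⊥ := (Finset.mem_filter.1 hsmem).2
    obtain ⟨m, hm, hm0⟩ := (Submodule.ne_bot_iff _).1 hsne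
    -- killing by variables outside s
    have hkill : ∀ j, j ∉ s → (X j : MvPolynomial (Fin n) K) • m = 0 := by
      intro j hj
      have h1 : ℳ (sq (insert j s)) = ⊥ := by
        by_contra h2
        have h3 := hsmax (insert j s) (Finset.mem_filter.2 ⟨Finset.mem_univ _, h2⟩)
        rw [Finset.card_insert_of_notMem hj] at h3
        omega
      have h3 := hcompat (sq s) j m hm
      rw [← sq_insert hj, h1] at h3
      simpa using h3
    -- the Stanley subspace
    set Nset : Set M := {v : M | ∃ b : Fin n →₀ ℕ,
      ↑b.support ⊆ (s : Set (Fin n)) ∧ v = (monomial b (1:K)) • m} with hNset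
    set NK : Submodule K M := Submodule.span K Nset with hNK
    have hNX : ∀ (i : Fin n), ∀ v ∈ NK, (X i : MvPolynomial (Fin n) K) • v ∈ NK := by
      intro i v hv
      induction hv using Submodule.span_induction with
      | mem y hy =>
        obtain ⟨b, hb, rfl⟩ := hy
        by_cases his : i ∈ s
        · rw [X_smul_monomial_smul]
          apply Submodule.subset_span
          refine ⟨b + Finsupp.single i 1, ?_, rfl⟩
          intro x hx
          have := Finsupp.support_add hx
          rcases Finset.mem_union.1 this with h | h
          · exact hb h
          · have : x = i := by
              have := Finsupp.support_single_subset h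
              simpa using this
            simp [this, his]
        · rw [← mul_smul, mul_comm, mul_smul, hkill i his, smul_zero]
          exact Submodule.zero_mem _
      | zero => rw [smul_zero]; exact Submodule.zero_mem _
      | add y z _ _ hy hz => rw [smul_add]; exact Submodule.add_mem _ hy hz
      | smul k y _ hy =>
        rw [smul_comm]
        exact Submodule.smul_mem _ _ hy
    have hNS' : ∀ (p : MvPolynomial (Fin n) K), ∀ v ∈ NK, p • v ∈ NK := by
      intro p
      induction p using MvPolynomial.induction_on with
      | C k => intro v hv; rw [C_smul]; exact Submodule.smul_mem _ _ hv
      | add p q hp hq => intro v hv; rw [add_smul]; exact Submodule.add_mem _ (hp v hv) (hq v hv)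
      | mul_X p i hp => intro v hv; rw [mul_smul]; exact hp _ (hNX i v hv)
    set NS : Submodule (MvPolynomial (Fin n) K) M :=
      { carrier := NK,
        add_mem' := fun ha hb => NK.add_mem ha hb,
        zero_mem' := NK.zero_mem,
        smul_mem' := fun p v hv => hNS' p v hv } with hNSdef
    have hNSmem : ∀ x : M, x ∈ NS ↔ x ∈ NK := fun x => Iff.rfl
    have hmN : m ∈ NK := Submodule.subset_span ⟨0, by simp, (monomial_zero_smul m).symm⟩
    -- homogeneous components of NK
    have hNproj : ∀ (c : Fin n →₀ ℕ), ∀ v ∈ NK, v ∈ ℳ c →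
        v ∈ Submodule.span K {x : M | ∃ b : Fin n →₀ ℕ,
          ↑b.support ⊆ (s : Set (Fin n)) ∧ sq s + b = c ∧ x = (monomial b (1:K)) • m} := by
      intro c v hv hvc
      have h1 : proj hdecomp c v ∈ (Submodule.span K Nset).map (proj hdecomp c) :=
        Submodule.mem_map_of_mem hv
      rw [Submodule.map_span] at h1
      rw [proj_self hdecomp hvc] at h1
      refine Submodule.span_le.2 ?_ h1
      rintro y ⟨z, ⟨b, hb, rfl⟩, rfl⟩
      have hzmem : (monomial b (1:K)) • m ∈ ℳ (sq s + b) := monomial_smul_mem hcompat b hm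
      by_cases h2 : sq s + b = c
      · rw [proj_of_mem hdecomp hzmem, dif_pos h2]
        exact Submodule.subset_span ⟨b, hb, h2, rfl⟩
      · rw [proj_of_mem hdecomp hzmem, dif_neg h2]
        exact Submodule.zero_mem _
    have hNcomp : ∀ (c : Fin n →₀ ℕ), ∀ v ∈ NK, v ∈ ℳ c →
        (∃ (b : Fin n →₀ ℕ) (k : K), ↑b.support ⊆ (s : Set (Fin n)) ∧ sq s + b = c ∧
          v = k • ((monomial b (1:K)) • m)) ∨ v = 0 := by
      intro c v hv hvc
      have h1 := hNproj c v hv hvc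
      by_cases h2 : ∃ b : Fin n →₀ ℕ, ↑b.support ⊆ (s : Set (Fin n)) ∧ sq s + b = c
      · obtain ⟨b0, hb0, hb0c⟩ := h2
        left
        have h3 : {x : M | ∃ b : Fin n →₀ ℕ,
            ↑b.support ⊆ (s : Set (Fin n)) ∧ sq s + b = c ∧ x = (monomial b (1:K)) • m}
            ⊆ {(monomial b0 (1:K)) • m} := by
          rintro x ⟨b, _, hbc, rfl⟩
          have : b = b0 := by
            exact add_left_cancel (hbc.trans hb0c.symm)
          rw [this]; rfl
        have h4 := Submodule.span_mono h3 h1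
        rw [Submodule.mem_span_singleton] at h4
        obtain ⟨k, hk⟩ := h4
        exact ⟨b0, k, hb0, hb0c, hk.symm⟩
      · right
        push_neg at h2
        have h3 : {x : M | ∃ b : Fin n →₀ ℕ,
            ↑b.support ⊆ (s : Set (Fin n)) ∧ sq s + b = c ∧ x = (monomial b (1:K)) • m}
            = ∅ := by
          rw [Set.eq_empty_iff_forall_notMem]
          rintro x ⟨b, hb, hbc, rfl⟩
          exact h2 b hb hbc
        rw [h3, Submodule.span_empty, Submodule.mem_bot] at h1
        exact h1
    -- ===== the quotient module =====
    set M' := M ⧸ NS with hM'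
    set q : M →ₗ[K] M' := LinearMap.restrictScalars K NS.mkQ with hq
    have hq0 : ∀ x : M, q x = 0 ↔ x ∈ NK := by
      intro x
      exact Submodule.Quotient.mk_eq_zero NS
    have hqS : ∀ (p : MvPolynomial (Fin n) K) (x : M), q (p • x) = p • q x := by
      intro p x
      simp only [hq, LinearMap.restrictScalars_apply, map_smul]
    have hqsurj : Function.Surjective q := Submodule.mkQ_surjective NS
    set ℳ' : (Fin n →₀ ℕ) → Submodule K M' := fun b => (ℳ b).map q with hℳ'
    -- internality of the quotient grading
    have hdecomp' : DirectSum.IsInternal ℳ' := by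
      constructor
      · -- injectivity
        rw [injective_iff_map_eq_zero]
        intro w hw
        set u : (Fin n →₀ ℕ) → M := fun b =>
          if h : (w b : M') ∈ ℳ' b ∧ (w b : M') ≠ 0 then
            Classical.choose ((Submodule.mem_map).1 h.1) else 0 with hu
        have humem : ∀ b, u b ∈ ℳ b := by
          intro b
          simp only [hu]
          split
          · rename_i h
            exact (Classical.choose_spec ((Submodule.mem_map).1 h.1)).1
          · exact Submodule.zero_mem _
        have huq : ∀ b, q (u b) = (w b : M') := by
          intro b
          simp only [hu]
          split
          · rename_i h
            exact (Classical.choose_spec ((Submodule.mem_map).1 h.1)).2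
          · rename_i h
            rw [map_zero]
            by_contra h2
            exact h ⟨(w b).2, fun h3 => h2 (by rw [h3])⟩
        have hsum : q (∑ b ∈ DFinsupp.support w, u b) = 0 := by
          rw [map_sum]
          have : ∀ b ∈ DFinsupp.support w, q (u b) = (w b : M') := fun b _ => huq b
          rw [Finset.sum_congr rfl this]
          have hw' : (DirectSum.coeAddMonoidHom ℳ') w = 0 := hw
          have hco : (DirectSum.coeAddMonoidHom ℳ') w
              = ∑ b ∈ DFinsupp.support w, ((w b : M')) := by
            conv_lhs => rw [← DirectSum.sum_support_of w]
            rw [map_sum]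
            exact Finset.sum_congr rfl (fun b _ => DirectSum.coeAddMonoidHom_of _ _ _)
          rw [← hco, hw']
        have hsN : (∑ b ∈ DFinsupp.support w, u b) ∈ NK := (hq0 _).1 hsum
        have hub : ∀ b0 ∈ DFinsupp.support w, u b0 ∈ NK := by
          intro b0 hb0
          have h1 : proj hdecomp b0 (∑ b ∈ DFinsupp.support w, u b) ∈ NK := by
            -- NK is stable under projections
            have hNKproj : ∀ v ∈ NK, proj hdecomp b0 v ∈ NK := by
              intro v hv
              induction hv using Submodule.span_induction with
              | mem y hy =>
                obtain ⟨b, hb, rfl⟩ := hy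
                rw [proj_of_mem hdecomp (monomial_smul_mem hcompat b hm)]
                split
                · exact Submodule.subset_span ⟨b, hb, rfl⟩
                · exact Submodule.zero_mem _
              | zero => rw [map_zero]; exact Submodule.zero_mem _
              | add y z _ _ hy hz => rw [map_add]; exact Submodule.add_mem _ hy hz
              | smul k y _ hy => rw [map_smul]; exact Submodule.smul_mem _ _ hy
            exact hNKproj _ hsN
          have h2 : proj hdecomp b0 (∑ b ∈ DFinsupp.support w, u b) = u b0 := by
            rw [map_sum]
            rw [Finset.sum_eq_single b0]
            · exact proj_self hdecomp (humem b0)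
            · intro b _ hbne
              exact proj_ne hdecomp (humem b) hbne
            · intro hb0'
              exact absurd hb0 hb0'
          rwa [h2] at h1
        rw [← DFinsupp.support_eq_empty, Finset.eq_empty_iff_forall_notMem]
        intro b hb
        have h3 := (hq0 (u b)).2 (hub b hb)
        rw [huq b] at h3
        exact (DFinsupp.mem_support_iff.1 hb) (Subtype.ext h3)
      · -- surjectivity
        intro x'
        obtain ⟨x, rfl⟩ := hqsurj x'
        obtain ⟨w, rfl⟩ := hdecomp.2 x
        refine ⟨∑ b ∈ DFinsupp.support w, DirectSum.of (fun b => ℳ' b) b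
          ⟨q (w b : M), Submodule.mem_map_of_mem (w b).2⟩, ?_⟩
        rw [map_sum]
        conv_rhs => rw [← DirectSum.sum_support_of w, map_sum, map_sum]
        refine Finset.sum_congr rfl (fun b _ => ?_)
        rw [DirectSum.coeAddMonoidHom_of, DirectSum.coeAddMonoidHom_of]
    -- compatibility for the quotient
    have hcompat' : ∀ (a : Fin n →₀ ℕ) (i : Fin n), ∀ x' ∈ ℳ' a,
        (X i : MvPolynomial (Fin n) K) • x' ∈ ℳ' (a + Finsupp.single i 1) := by
      rintro a i x' ⟨x, hx, rfl⟩
      rw [← hqS]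
      exact Submodule.mem_map_of_mem (hcompat a i x hx)
    -- squarefreeness of the quotient
    have hsf' : ∀ (c : Fin n →₀ ℕ) (i : Fin n), 0 < c i →
        Function.Bijective (fun y : ℳ' c =>
          (⟨(X i : MvPolynomial (Fin n) K) • (y : M'), hcompat' c i y y.2⟩ :
            ℳ' (c + Finsupp.single i 1))) := by
      intro c i hci
      constructor
      · -- injective
        have key : ∀ x ∈ ℳ c, (X i : MvPolynomial (Fin n) K) • x ∈ NK → x ∈ NK := by
          intro x hx hXx
          have hXxm : (X i : MvPolynomial (Fin n) K) • x ∈ ℳ (c + Finsupp.single i 1) :=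
            hcompat c i x hx
          rcases hNcomp _ _ hXx hXxm with ⟨b', k, hb's, hb'c, hb'⟩ | h0
          · -- X i • x = k • monomial b' • m
            have hb'i : 0 < b' i := by
              have h1 := DFunLike.congr_fun hb'c i
              simp only [Finsupp.add_apply, Finsupp.single_eq_same] at h1
              have h2 := sq_le_one s i
              omega
            set b := b' - Finsupp.single i 1 with hbdef
            have hbs : ↑b.support ⊆ (s : Set (Fin n)) :=
              fun z hz => hb's (Finsupp.support_tsub hz)
            have hbc : sq s + b = c := by
              apply add_right_cancel (b := Finsupp.single i 1)
              rw [add_assoc, sub_single_add hb'i, hb'c]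
            have hgmem : (monomial b (1:K)) • m ∈ ℳ c := by
              have := monomial_smul_mem hcompat b hm
              rwa [hbc] at this
            have hXg : (X i : MvPolynomial (Fin n) K) • ((monomial b (1:K)) • m)
                = (monomial b' (1:K)) • m := by
              rw [X_smul_monomial_smul, hbdef, sub_single_add hb'i]
            have hdiff : (X i : MvPolynomial (Fin n) K) • (x - k • ((monomial b (1:K)) • m))
                = 0 := by
              rw [smul_sub, hb', smul_comm (X i : MvPolynomial (Fin n) K) k, hXg]
              exact sub_self _
            have hdm : x - k • ((monomial b (1:K)) • m) ∈ ℳ c :=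
              Submodule.sub_mem _ hx (Submodule.smul_mem _ _ hgmem)
            have := smul_eq_zero_of_mem hcompat hsf hci hdm hdiff
            have hx' : x = k • ((monomial b (1:K)) • m) := by
              have := sub_eq_zero.1 this; exact this
            rw [hx']
            exact Submodule.smul_mem _ _
              (Submodule.subset_span ⟨b, hbs, rfl⟩)
          · have := smul_eq_zero_of_mem hcompat hsf hci hx h0
            rw [this]
            exact Submodule.zero_mem _
        intro y z hyz
        obtain ⟨y, hy⟩ := y
        obtain ⟨z, hz⟩ := z
        apply Subtype.ext
        simp only
        obtain ⟨ylift, hylift, rfl⟩ := hy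
        obtain ⟨zlift, hzlift, rfl⟩ := hz
        have h1 : (X i : MvPolynomial (Fin n) K) • q ylift
            = (X i : MvPolynomial (Fin n) K) • q zlift := congrArg Subtype.val hyz
        rw [← hqS, ← hqS] at h1
        have h2 : q ((X i : MvPolynomial (Fin n) K) • (ylift - zlift)) = 0 := by
          rw [smul_sub, map_sub, h1, sub_self]
        have h3 : ylift - zlift ∈ NK := key _ (Submodule.sub_mem _ hylift hzlift) ((hq0 _).1 h2)
        have h4 : q (ylift - zlift) = 0 := (hq0 _).2 h3
        rw [map_sub] at h4
        have := sub_eq_zero.1 h4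
        rw [this]
      · -- surjective
        rintro ⟨y', hy'⟩
        obtain ⟨y, hy, rfl⟩ := hy'
        obtain ⟨x, hx, hxy⟩ := surj_step hcompat hsf hci hy
        refine ⟨⟨q x, Submodule.mem_map_of_mem hx⟩, ?_⟩
        apply Subtype.ext
        simp only
        rw [← hqS, hxy]
    -- finite dimensionality of quotient components
    have hfd' : ∀ b, FiniteDimensional K (ℳ' b) := by
      intro b
      have h1 : ℳ' b = LinearMap.range (q ∘ₗ (ℳ b).subtype) := by
        rw [LinearMap.range_comp, Submodule.range_subtype]
      rw [h1]
      have := hfd b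
      infer_instance
    -- dimension drop
    have hdrop : (∑ s' : Finset (Fin n), Module.finrank K (ℳ' (sq s'))) < D := by
      rw [← hD]
      apply Finset.sum_lt_sum
      · intro s' _
        have := hfd (sq s')
        exact Submodule.finrank_map_le q (ℳ (sq s'))
      · refine ⟨s, Finset.mem_univ _, ?_⟩
        have := hfd (sq s)
        set f : (ℳ (sq s)) →ₗ[K] M' := q ∘ₗ (ℳ (sq s)).subtype with hf
        have hrange : LinearMap.range f = ℳ' (sq s) := by
          rw [hf, LinearMap.range_comp, Submodule.range_subtype]
        have hker : Module.finrank K (LinearMap.ker f) ≠ 0 := by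
          intro h0
          have h1 : LinearMap.ker f = ⊥ := by
            have hfin : FiniteDimensional K (LinearMap.ker f) := inferInstance
            rwa [Submodule.finrank_eq_zero] at h0
          have h2 : (⟨m, hm⟩ : ℳ (sq s)) ∈ LinearMap.ker f := by
            rw [LinearMap.mem_ker, hf]
            simp only [LinearMap.coe_comp, Function.comp_apply, Submodule.coe_subtype]
            exact (hq0 m).2 hmN
          rw [h1] at h2
          have : (⟨m, hm⟩ : ℳ (sq s)) = 0 := h2
          exact hm0 (congrArg Subtype.val this)
        have hrn := LinearMap.finrank_range_add_finrank_ker f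
        rw [hrange] at hrn
        omega
    -- apply the induction hypothesis
    have hIH := ih _ hdrop M' ℳ' hdecomp' hcompat' hsf' hfd' rfl
    obtain ⟨t', m', Z', a', hmem', hsq', hsupp', hli', hspan'⟩ := hIH
    have hlift : ∀ j : Fin t', ∃ v : M, v ∈ ℳ (a' j) ∧ q v = m' j := by
      intro j
      obtain ⟨v, hv, hqv⟩ := hmem' j
      exact ⟨v, hv, hqv⟩
    choose u humem huq using hlift
    have hmmlast : (Fin.snoc u m : Fin (t'+1) → M) (Fin.last t') = m := Fin.snoc_last _ _
    have hZZlast : (Fin.snoc Z' s : Fin (t'+1) → Finset (Fin n)) (Fin.last t') = s :=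
      Fin.snoc_last _ _
    have haalast : (Fin.snoc a' (sq s) : Fin (t'+1) → (Fin n →₀ ℕ)) (Fin.last t') = sq s :=
      Fin.snoc_last _ _
    have hmmcast : ∀ j : Fin t', (Fin.snoc u m : Fin (t'+1) → M) (Fin.castSucc j) = u j :=
      fun j => Fin.snoc_castSucc _ _ _
    have hZZcast : ∀ j : Fin t',
        (Fin.snoc Z' s : Fin (t'+1) → Finset (Fin n)) (Fin.castSucc j) = Z' j :=
      fun j => Fin.snoc_castSucc _ _ _
    have haacast : ∀ j : Fin t',
        (Fin.snoc a' (sq s) : Fin (t'+1) → (Fin n →₀ ℕ)) (Fin.castSucc j) = a' j :=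
      fun j => Fin.snoc_castSucc _ _ _
    refine ⟨t' + 1, Fin.snoc u m, Fin.snoc Z' s, Fin.snoc a' (sq s), ?_, ?_, ?_, ?_, ?_⟩
    · intro i
      refine Fin.lastCases ?_ ?_ i
      · rw [hmmlast, haalast]; exact hm
      · intro j; rw [hmmcast, haacast]; exact humem j
    · intro i
      refine Fin.lastCases ?_ ?_ i
      · rw [haalast]; exact sq_le_one s
      · intro j; rw [haacast]; exact hsq' j
    · intro i
      refine Fin.lastCases ?_ ?_ i
      · rw [haalast, hZZlast, sq_support]
      · intro j; rw [haacast, hZZcast]; exact hsupp' j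
    · -- linear independence
      have li_old : LinearIndependent K
          (fun p : Σ j : Fin t', {b : Fin n →₀ ℕ // ↑b.support ⊆ (Z' j : Set (Fin n))} =>
            (monomial p.2.val (1:K)) • u p.1) := by
        apply LinearIndependent.of_comp q
        have hco : ⇑q ∘ (fun p : Σ j : Fin t',
            {b : Fin n →₀ ℕ // ↑b.support ⊆ (Z' j : Set (Fin n))} =>
            (monomial p.2.val (1:K)) • u p.1)
            = fun p : Σ j : Fin t', {b : Fin n →₀ ℕ // ↑b.support ⊆ (Z' j : Set (Fin n))} =>
            (monomial p.2.val (1:K)) • m' p.1 := by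
          funext p
          simp only [Function.comp_apply]
          rw [hqS, huq]
        rw [hco]
        exact hli'
      have li_new : LinearIndependent K
          (fun b : {b : Fin n →₀ ℕ // ↑b.support ⊆ (s : Set (Fin n))} =>
            (monomial b.val (1:K)) • m) := by
        have hdeginj : Function.Injective
            (fun b : {b : Fin n →₀ ℕ // ↑b.support ⊆ (s : Set (Fin n))} => sq s + b.val) := by
          intro b b' h
          exact Subtype.ext (add_left_cancel h)
        refine iSupIndep.linearIndependent _
          ((hdecomp.submodule_iSupIndep).comp hdeginj) ?_ ?_
        · intro b
          exact monomial_smul_mem hcompat b.val hm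
        · intro b
          exact monomial_smul_ne_zero hcompat hsf hm hm0 b.val b.2
      have hdisj : Disjoint
          (Submodule.span K (Set.range (fun p : Σ j : Fin t',
            {b : Fin n →₀ ℕ // ↑b.support ⊆ (Z' j : Set (Fin n))} =>
            (monomial p.2.val (1:K)) • u p.1)))
          (Submodule.span K (Set.range
            (fun b : {b : Fin n →₀ ℕ // ↑b.support ⊆ (s : Set (Fin n))} =>
            (monomial b.val (1:K)) • m))) := by
        rw [Submodule.disjoint_def]
        intro x hxold hxN
        have hxNK : x ∈ NK := by
          refine Submodule.span_le.2 ?_ hxN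
          rintro y ⟨b, rfl⟩
          exact Submodule.subset_span ⟨b.val, b.2, rfl⟩
        have hqx : q x = 0 := (hq0 x).2 hxNK
        rw [Finsupp.mem_span_range_iff_exists_finsupp] at hxold
        obtain ⟨l, hl⟩ := hxold
        have h2 : Finsupp.linearCombination K (fun p : Σ j : Fin t',
            {b : Fin n →₀ ℕ // ↑b.support ⊆ (Z' j : Set (Fin n))} =>
            (monomial p.2.val (1:K)) • m' p.1) l = 0 := by
          rw [Finsupp.linearCombination_apply]
          have h3 : (l.sum fun p k => k • ((monomial p.2.val (1:K)) • m' p.1)) = q x := by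
            rw [← hl, map_finsuppSum]
            apply Finsupp.sum_congr
            intro p _
            rw [map_smul, hqS, huq]
          rw [h3, hqx]
        have hl0 : l = 0 := linearIndependent_iff.1 hli' l h2
        rw [hl0, Finsupp.sum_zero_index] at hl
        exact hl.symm
      have hsumli := LinearIndependent.sum_type li_old li_new hdisj
      have hfun : ((fun p : Σ i : Fin (t'+1), {b : Fin n →₀ ℕ //
          ↑b.support ⊆ ((Fin.snoc Z' s : Fin (t'+1) → Finset (Fin n)) i : Set (Fin n))} =>
          (monomial p.2.val (1:K)) • (Fin.snoc u m : Fin (t'+1) → M) p.1) ∘ (snocEquiv Z' s))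
          = Sum.elim
            (fun p : Σ j : Fin t', {b : Fin n →₀ ℕ // ↑b.support ⊆ (Z' j : Set (Fin n))} =>
              (monomial p.2.val (1:K)) • u p.1)
            (fun b : {b : Fin n →₀ ℕ // ↑b.support ⊆ (s : Set (Fin n))} =>
              (monomial b.val (1:K)) • m) := by
        funext x
        rcases x with (⟨j, b⟩ | b)
        · show (monomial b.val (1:K)) • (Fin.snoc u m : Fin (t'+1) → M) (Fin.castSucc j)
            = (monomial b.val (1:K)) • u j
          rw [hmmcast]
        · show (monomial b.val (1:K)) • (Fin.snoc u m : Fin (t'+1) → M) (Fin.last t')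
            = (monomial b.val (1:K)) • m
          rw [hmmlast]
      exact (linearIndependent_equiv (snocEquiv Z' s)).1 (by rw [hfun]; exact hsumli)
    · -- spanning
      rw [eq_top_iff]
      intro x _
      have hNW : NK ≤ Submodule.span K {v : M | ∃ (i : Fin (t'+1)) (b : Fin n →₀ ℕ),
          ↑b.support ⊆ ((Fin.snoc Z' s : Fin (t'+1) → Finset (Fin n)) i : Set (Fin n)) ∧
            v = (monomial b (1:K)) • (Fin.snoc u m : Fin (t'+1) → M) i} := by
        rw [hNK]
        apply Submodule.span_mono
        rintro y ⟨b, hb, rfl⟩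
        refine ⟨Fin.last t', b, ?_, ?_⟩
        · rw [hZZlast]; exact hb
        · rw [hmmlast]
      have h1 : q x ∈ Submodule.span K
          (⇑q '' {v : M | ∃ (i : Fin (t'+1)) (b : Fin n →₀ ℕ),
            ↑b.support ⊆ ((Fin.snoc Z' s : Fin (t'+1) → Finset (Fin n)) i : Set (Fin n)) ∧
              v = (monomial b (1:K)) • (Fin.snoc u m : Fin (t'+1) → M) i}) := by
        have h2 : q x ∈ Submodule.span K {v : M' | ∃ (i : Fin t') (b : Fin n →₀ ℕ),
            ↑b.support ⊆ (Z' i : Set (Fin n)) ∧ v = (monomial b (1:K)) • m' i} := by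
          rw [hspan']; trivial
        refine Submodule.span_mono ?_ h2
        rintro y ⟨i, b, hb, rfl⟩
        refine ⟨(monomial b (1:K)) • u i, ⟨Fin.castSucc i, b, ?_, ?_⟩, ?_⟩
        · rw [hZZcast]; exact hb
        · rw [hmmcast]
        · rw [hqS, huq]
      rw [Submodule.span_image] at h1
      obtain ⟨y, hyW, hqxy⟩ := h1
      have hxy : x - y ∈ NK := by
        apply (hq0 _).1
        rw [map_sub, hqxy, sub_self]
      have hxeq : x = y + (x - y) := by abel
      rw [hxeq]
      exact Submodule.add_mem _ hyW (hNW hxy)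
end SF10

/-- A finitely generated `ℕⁿ`-graded module `M` over
`S = K[x_1,…,x_n]` has a squarefree Stanley decomposition
`M = ⊕ m_i K[Z_i]` (each `m_i` homogeneous of squarefree degree with
`supp(deg m_i) ⊆ Z_i`, and the elements `x^b m_i`, `supp b ⊆ Z_i`,
forming a `K`-basis of `M`) if and only if `M` is a squarefree module. -/
theorem stmt10 (K : Type) [Field K] (n : ℕ)
    (M : Type) [AddCommGroup M] [Module K M]
    [Module (MvPolynomial (Fin n) K) M]
    [IsScalarTower K (MvPolynomial (Fin n) K) M]
    (ℳ : (Fin n →₀ ℕ) → Submodule K M)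
    (hdecomp : DirectSum.IsInternal ℳ)
    (hfg : Module.Finite (MvPolynomial (Fin n) K) M)
    (hcompat : ∀ (a : Fin n →₀ ℕ) (i : Fin n), ∀ m ∈ ℳ a,
        (X i : MvPolynomial (Fin n) K) • m ∈ ℳ (a + Finsupp.single i 1)) :
    (∃ (t : ℕ) (m : Fin t → M) (Z : Fin t → Finset (Fin n))
        (a : Fin t → (Fin n →₀ ℕ)),
      (∀ i, m i ∈ ℳ (a i)) ∧
      (∀ i j, a i j ≤ 1) ∧
      (∀ i, (a i).support ⊆ Z i) ∧
      LinearIndependent K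
        (fun p : Σ i : Fin t, {b : Fin n →₀ ℕ // ↑b.support ⊆ (Z i : Set (Fin n))} =>
          (monomial p.2.val (1 : K)) • m p.1) ∧
      Submodule.span K
        {v : M | ∃ (i : Fin t) (b : Fin n →₀ ℕ),
          ↑b.support ⊆ (Z i : Set (Fin n)) ∧ v = (monomial b (1 : K)) • m i} = ⊤)
    ↔
    (∀ (a : Fin n →₀ ℕ) (i : Fin n), 0 < a i →
      Function.Bijective (fun x : ℳ a =>
        (⟨(X i : MvPolynomial (Fin n) K) • (x : M), hcompat a i x x.2⟩ :
          ℳ (a + Finsupp.single i 1)))) := by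
  constructor
  · rintro ⟨t, m, Z, a, hm, hsq, hsupp, hli, hspan⟩ c i hci
    exact SF10.forward_dir hdecomp hcompat t m Z a hm hsq hsupp hli hspan c i hci
  · intro hsf
    haveI := hfg
    have hfd : ∀ b, FiniteDimensional K (ℳ b) :=
      fun b => SF10.component_fd hdecomp hcompat b
    exact SF10.aux K n
      (∑ s : Finset (Fin n), Module.finrank K (ℳ (SF10.sq s)))
      M ℳ hdecomp hcompat hsf hfd rfl
end

section
/- Let I = (u_1,…,u_m) ⊆ S be a monomial ideal with linear quotients with respect to the order u_1,…,u_m, i.e., I_i := (u_1,…,u_{i−1}) : u_i is generated by a subset G(I_i) of the variables for i = 2,…,m. Set Z_1 = {x_1,…,x_n} and Z_i = {x_1,…,x_n} \ G(I_i). Then I = ⊕_{i=1}^m u_i K[Z_i] is a Stanley decomposition of I. -/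
open MvPolynomial

/-- Let `I = (u_1,…,u_m) ⊆ S = K[x_1,…,x_n]` be a monomial
ideal with linear quotients: each colon ideal
`I_i = (u_1,…,u_{i−1}) : u_i` is generated by the set of variables
`{x_j : j ∈ G i}`.  With `Z_i = {x_1,…,x_n} \ G(I_i)`, the ideal decomposes
as `I = ⊕_{i=1}^m u_i K[Z_i]`: the monomials `u_i · x^b` with
`supp b ∩ G i = ∅` form a `K`-basis of `I`. -/
theorem stmt16 (K : Type) [Field K] (n m : ℕ)
    (u : Fin m → (Fin n →₀ ℕ)) (G : Fin m → Finset (Fin n))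
    (hlq : ∀ i : Fin m,
      {f : MvPolynomial (Fin n) K |
          f * monomial (u i) (1 : K) ∈
            Ideal.span {g | ∃ j : Fin m, j < i ∧ g = monomial (u j) (1 : K)}} =
        (Ideal.span {g | ∃ j ∈ G i, g = (X j : MvPolynomial (Fin n) K)} : Set _)) :
    LinearIndependent K
      (fun p : Σ i : Fin m, {b : Fin n →₀ ℕ // ∀ j ∈ G i, b j = 0} =>
        (monomial (u p.1 + p.2.val) (1 : K) : MvPolynomial (Fin n) K)) ∧
    Submodule.span K
      {f : MvPolynomial (Fin n) K | ∃ (i : Fin m) (b : Fin n →₀ ℕ),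
        (∀ j ∈ G i, b j = 0) ∧ f = monomial (u i + b) (1 : K)} =
      (Ideal.span {g | ∃ i : Fin m, g = monomial (u i) (1 : K)}).restrictScalars K := by
  classical
  -- set rewrites
  have hset1 : ∀ i : Fin m,
      {g : MvPolynomial (Fin n) K | ∃ j : Fin m, j < i ∧ g = monomial (u j) (1 : K)} =
        (fun s => monomial s (1 : K)) '' (u '' {j | j < i}) := by
    intro i; ext g
    constructor
    · rintro ⟨j, hj, rfl⟩; exact ⟨u j, ⟨j, hj, rfl⟩, rfl⟩
    · rintro ⟨s, ⟨j, hj, rfl⟩, rfl⟩; exact ⟨j, hj, rfl⟩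
  have hset2 : ∀ i : Fin m,
      {g : MvPolynomial (Fin n) K | ∃ j ∈ G i, g = X j} = X '' (G i : Set (Fin n)) := by
    intro i; ext g
    constructor
    · rintro ⟨j, hj, rfl⟩; exact ⟨j, hj, rfl⟩
    · rintro ⟨j, hj, rfl⟩; exact ⟨j, hj, rfl⟩
  have hset3 : {g : MvPolynomial (Fin n) K | ∃ i : Fin m, g = monomial (u i) (1 : K)} =
      (fun s => monomial s (1 : K)) '' (Set.range u) := by
    ext g
    constructor
    · rintro ⟨i, rfl⟩; exact ⟨u i, ⟨i, rfl⟩, rfl⟩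
    · rintro ⟨s, ⟨i, rfl⟩, rfl⟩; exact ⟨i, rfl⟩
  -- monomial membership in monomial ideal
  have hmono : ∀ (d : Fin n →₀ ℕ) (s : Set (Fin n →₀ ℕ)),
      (monomial d (1 : K)) ∈ Ideal.span ((fun s => monomial s (1 : K)) '' s) ↔
        ∃ si ∈ s, si ≤ d := by
    intro d s
    rw [mem_ideal_span_monomial_image]
    simp [support_monomial]
  -- key disjointness
  have key : ∀ (i j : Fin m) (b c : Fin n →₀ ℕ), (∀ k ∈ G i, b k = 0) → j < i →
      u i + b ≠ u j + c := by
    intro i j b c hb hij heq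
    have hmuleq : monomial b (1 : K) * monomial (u i) 1 =
        monomial c (1 : K) * monomial (u j) 1 := by
      rw [monomial_mul, monomial_mul, one_mul, add_comm b (u i), heq, add_comm (u j) c]
    have h2 : (monomial b (1 : K)) ∈
        {f : MvPolynomial (Fin n) K | f * monomial (u i) (1 : K) ∈
          Ideal.span {g | ∃ j' : Fin m, j' < i ∧ g = monomial (u j') (1 : K)}} := by
      simp only [Set.mem_setOf_eq, hmuleq]
      exact Ideal.mul_mem_left _ _ (Ideal.subset_span ⟨j, hij, rfl⟩)
    rw [hlq i, hset2 i] at h2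
    rw [SetLike.mem_coe, mem_ideal_span_X_image] at h2
    obtain ⟨k, hk1, hk2⟩ := h2 b (by simp [support_monomial])
    exact hk2 (hb k hk1)
  -- injectivity
  have hinj : Function.Injective
      (fun p : Σ i : Fin m, {b : Fin n →₀ ℕ // ∀ j ∈ G i, b j = 0} => u p.1 + p.2.val) := by
    rintro ⟨i, b, hb⟩ ⟨j, c, hc⟩ h
    simp only at h
    rcases lt_trichotomy i j with hij | hij | hij
    · exact absurd h.symm (key j i c b hc hij)
    · subst hij
      have : b = c := by
        have := add_left_cancel h
        exact this
      subst this; rfl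
    · exact absurd h (key i j b c hb hij)
  constructor
  · have h := ((basisMonomials (Fin n) K).linearIndependent).comp _ hinj
    have : (⇑(basisMonomials (Fin n) K) ∘
        fun p : Σ i : Fin m, {b : Fin n →₀ ℕ // ∀ j ∈ G i, b j = 0} => u p.1 + p.2.val) =
        fun p : Σ i : Fin m, {b : Fin n →₀ ℕ // ∀ j ∈ G i, b j = 0} =>
          (monomial (u p.1 + p.2.val) (1 : K) : MvPolynomial (Fin n) K) := by
      funext p
      simp [coe_basisMonomials]
    rwa [this] at h
  · apply le_antisymm
    · rw [Submodule.span_le]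
      rintro f ⟨i, b, hb, rfl⟩
      show (monomial (u i + b) (1 : K)) ∈ Ideal.span _
      have : monomial (u i + b) (1 : K) = monomial b 1 * monomial (u i) 1 := by
        rw [monomial_mul, one_mul, add_comm]
      rw [this]
      exact Ideal.mul_mem_left _ _ (Ideal.subset_span ⟨i, rfl⟩)
    · -- key induction
      have key2 : ∀ (N : ℕ) (i : Fin m), i.val < N → ∀ d : Fin n →₀ ℕ, u i ≤ d →
          (monomial d (1 : K)) ∈ Submodule.span K
            {f : MvPolynomial (Fin n) K | ∃ (i : Fin m) (b : Fin n →₀ ℕ),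
              (∀ j ∈ G i, b j = 0) ∧ f = monomial (u i + b) (1 : K)} := by
        intro N
        induction N with
        | zero => intro i hi; omega
        | succ N ih =>
          intro i hi d hd
          set c := d - u i with hc
          have hdc : u i + c = d := add_tsub_cancel_of_le hd
          by_cases hG : ∀ j ∈ G i, c j = 0
          · exact Submodule.subset_span ⟨i, c, hG, by rw [hdc]⟩
          · push_neg at hG
            obtain ⟨k, hk, hck⟩ := hG
            have h1 : (X k : MvPolynomial (Fin n) K) ∈
                {f : MvPolynomial (Fin n) K | f * monomial (u i) (1 : K) ∈
                  Ideal.span {g | ∃ j : Fin m, j < i ∧ g = monomial (u j) (1 : K)}} := by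
              rw [hlq i]
              exact Ideal.subset_span ⟨k, hk, rfl⟩
            have h3 : (monomial (Finsupp.single k 1 + u i) (1 : K)) ∈
                Ideal.span {g : MvPolynomial (Fin n) K |
                  ∃ j : Fin m, j < i ∧ g = monomial (u j) (1 : K)} := by
              have : (X k : MvPolynomial (Fin n) K) * monomial (u i) 1 =
                  monomial (Finsupp.single k 1 + u i) (1 : K) := by
                rw [X, monomial_mul, one_mul]
              simp only [Set.mem_setOf_eq] at h1
              rwa [this] at h1
            rw [hset1 i, hmono] at h3
            obtain ⟨s, ⟨j, hj, rfl⟩, hle⟩ := h3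
            have hjd : u j ≤ d := by
              refine hle.trans ?_
              rw [← hdc]
              exact add_le_add (Finsupp.single_le_iff.mpr (Nat.one_le_iff_ne_zero.mpr hck))
                le_rfl |>.trans_eq (add_comm _ _)
            have hji : j.val < i.val := hj
            exact ih j (by omega) d hjd
      intro f hf
      rw [Submodule.restrictScalars_mem, hset3, mem_ideal_span_monomial_image] at hf
      rw [← support_sum_monomial_coeff f]
      apply Submodule.sum_mem
      intro d hd
      obtain ⟨s, ⟨i, rfl⟩, hle⟩ := hf d hd
      rw [← mul_one (coeff d f), ← smul_eq_mul, ← smul_monomial]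
      exact Submodule.smul_mem _ _ (key2 m i i.isLt d hle)
end

section
/- Let I ⊆ S be a monomial ideal with linear quotients, with r(I) = max_{2≤i≤m} |G(I_i)| where I_i = (u_1,…,u_{i−1}) : u_i. Then sdepth(I) ≥ n − r(I) = depth(I); in particular Stanley's conjecture sdepth(I) ≥ depth(I) holds for monomial ideals with linear quotients. -/
open MvPolynomial

/-- Let `I = (u_1,…,u_m) ⊆ S = K[x_1,…,x_n]` be a monomial
ideal with linear quotients, and `r(I) = max_i |G(I_i)|`.  Then
`sdepth(I) ≥ n − r(I) (= depth I)`: there is a Stanley decomposition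
`I = ⊕ v_i K[Z_i]` into Stanley spaces spanned by monomials in which every
Stanley space has dimension `|Z_i| ≥ n − r(I)`; thus Stanley's conjecture
holds for monomial ideals with linear quotients. -/
theorem stmt17 (K : Type) [Field K] (n m : ℕ)
    (u : Fin m → (Fin n →₀ ℕ)) (G : Fin m → Finset (Fin n))
    (hlq : ∀ i : Fin m,
      {f : MvPolynomial (Fin n) K |
          f * monomial (u i) (1 : K) ∈
            Ideal.span {g | ∃ j : Fin m, j < i ∧ g = monomial (u j) (1 : K)}} =
        (Ideal.span {g | ∃ j ∈ G i, g = (X j : MvPolynomial (Fin n) K)} : Set _)) :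
    ∃ (t : ℕ) (v : Fin t → (Fin n →₀ ℕ)) (Z : Fin t → Finset (Fin n)),
      LinearIndependent K
        (fun p : Σ i : Fin t, {b : Fin n →₀ ℕ // ↑b.support ⊆ (Z i : Set (Fin n))} =>
          (monomial (v p.1 + p.2.val) (1 : K) : MvPolynomial (Fin n) K)) ∧
      Submodule.span K
        {f : MvPolynomial (Fin n) K | ∃ (i : Fin t) (b : Fin n →₀ ℕ),
          ↑b.support ⊆ (Z i : Set (Fin n)) ∧ f = monomial (v i + b) (1 : K)} =
        (Ideal.span {g | ∃ i : Fin m, g = monomial (u i) (1 : K)}).restrictScalars K ∧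
      ∀ i : Fin t, n - Finset.univ.sup (fun j => (G j).card) ≤ (Z i).card := by
  classical
  -- Key equivalence extracted from the linear-quotients hypothesis
  have key : ∀ (i : Fin m) (c : Fin n →₀ ℕ),
      (∃ j : Fin m, j < i ∧ u j ≤ c + u i) ↔ (∃ j ∈ G i, c j ≠ 0) := by
    intro i c
    have h := congrArg (fun S => monomial c (1 : K) ∈ S) (hlq i)
    simp only [Set.mem_setOf_eq, eq_iff_iff, SetLike.mem_coe] at h
    rw [monomial_mul, mul_one] at h
    have hL : {g | ∃ j : Fin m, j < i ∧ g = monomial (u j) (1 : K)} =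
        (fun s => monomial s (1 : K)) '' {s | ∃ j : Fin m, j < i ∧ s = u j} := by
      ext g
      constructor
      · rintro ⟨j, hj, rfl⟩; exact ⟨u j, ⟨j, hj, rfl⟩, rfl⟩
      · rintro ⟨s, ⟨j, hj, rfl⟩, rfl⟩; exact ⟨j, hj, rfl⟩
    have hR : {g | ∃ j ∈ G i, g = (X j : MvPolynomial (Fin n) K)} =
        MvPolynomial.X '' (↑(G i) : Set (Fin n)) := by
      ext g
      constructor
      · rintro ⟨j, hj, rfl⟩; exact ⟨j, hj, rfl⟩
      · rintro ⟨j, hj, rfl⟩; exact ⟨j, hj, rfl⟩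
    rw [hL, hR, mem_ideal_span_monomial_image, mem_ideal_span_X_image] at h
    have hs : (monomial (c + u i) (1 : K)).support = {c + u i} := by
      rw [support_monomial, if_neg one_ne_zero]
    have hs' : (monomial c (1 : K)).support = {c} := by
      rw [support_monomial, if_neg one_ne_zero]
    rw [hs] at h
    rw [hs'] at h
    simp only [Finset.mem_singleton, forall_eq] at h
    constructor
    · rintro ⟨j, hj, hle⟩
      obtain ⟨k, hk, hk'⟩ := h.mp ⟨u j, ⟨j, hj, rfl⟩, hle⟩
      exact ⟨k, hk, hk'⟩
    · rintro ⟨j, hj, hj'⟩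
      obtain ⟨s, ⟨k, hk, rfl⟩, hle⟩ := h.mpr ⟨j, hj, hj'⟩
      exact ⟨k, hk, hle⟩
  refine ⟨m, u, fun i => (G i)ᶜ, ?_, ?_, ?_⟩
  · -- linear independence
    have inj : Function.Injective
        (fun p : Σ i : Fin m, {b : Fin n →₀ ℕ //
            ↑b.support ⊆ (((G i)ᶜ : Finset (Fin n)) : Set (Fin n))} =>
          u p.1 + p.2.val) := by
      rintro ⟨i, b, hb⟩ ⟨k, c, hc⟩ hik
      simp only at hik
      have key' : ∀ (i k : Fin m) (b c : Fin n →₀ ℕ),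
          ↑b.support ⊆ (((G i)ᶜ : Finset (Fin n)) : Set (Fin n)) →
          u i + b = u k + c → ¬ k < i := by
        intro i k b c hb heq hki
        have hle : u k ≤ b + u i := by
          rw [add_comm b (u i), heq]; exact le_add_right le_rfl
        obtain ⟨j, hj, hj'⟩ := (key i b).mp ⟨k, hki, hle⟩
        have := hb (Finsupp.mem_support_iff.mpr hj')
        simp only [Finset.coe_compl, Set.mem_compl_iff, Finset.mem_coe] at this
        exact this hj
      have hik' : i = k := by
        rcases lt_trichotomy i k with h | h | h
        · exact absurd h (key' k i c b hc hik.symm)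
        · exact h
        · exact absurd h (key' i k b c hb hik)
      subst hik'
      have : b = c := by
        have := hik
        exact add_left_cancel this
      subst this
      rfl
    have := (MvPolynomial.basisMonomials (Fin n) K).linearIndependent.comp _ inj
    rwa [MvPolynomial.coe_basisMonomials] at this
  · -- span equality
    apply le_antisymm
    · rw [Submodule.span_le]
      rintro g ⟨i, b, hb, rfl⟩
      show monomial (u i + b) (1 : K) ∈
        Ideal.span {g | ∃ i : Fin m, g = monomial (u i) (1 : K)}
      have : monomial (u i + b) (1 : K) =
          monomial b (1 : K) * monomial (u i) (1 : K) := by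
        rw [monomial_mul, mul_one, add_comm]
      rw [this]
      exact Ideal.mul_mem_left _ _ (Ideal.subset_span ⟨i, rfl⟩)
    · intro f hf
      have hI : {g | ∃ i : Fin m, g = monomial (u i) (1 : K)} =
          (fun s => monomial s (1 : K)) '' (Set.range u) := by
        ext g
        constructor
        · rintro ⟨i, rfl⟩; exact ⟨u i, ⟨i, rfl⟩, rfl⟩
        · rintro ⟨s, ⟨i, rfl⟩, rfl⟩; exact ⟨i, rfl⟩
      have hf' : f ∈ Ideal.span ((fun s => monomial s (1 : K)) '' (Set.range u)) := by
        rw [← hI]; exact hf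
      rw [mem_ideal_span_monomial_image] at hf'
      -- every monomial of f lies in the Stanley set
      have hmono : ∀ b ∈ f.support, (monomial b (1 : K)) ∈
          {f : MvPolynomial (Fin n) K | ∃ (i : Fin m) (b : Fin n →₀ ℕ),
            ↑b.support ⊆ (((G i)ᶜ : Finset (Fin n)) : Set (Fin n)) ∧
            f = monomial (u i + b) (1 : K)} := by
        intro b hbsup
        obtain ⟨s, ⟨j, rfl⟩, hle⟩ := hf' b hbsup
        -- take minimal i with u i ≤ b
        obtain ⟨i, hiT, hmin⟩ := (Finset.univ.filter (fun j => u j ≤ b)).exists_min_image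
          id ⟨j, by simp [hle]⟩
        have hui : u i ≤ b := (Finset.mem_filter.mp hiT).2
        refine ⟨i, b - u i, ?_, ?_⟩
        · intro j' hj'
          simp only [Finset.coe_compl, Set.mem_compl_iff, Finset.mem_coe]
          intro hjG
          have hj'' : (b - u i) j' ≠ 0 := by
            have := Finset.mem_coe.mp hj'
            exact Finsupp.mem_support_iff.mp this
          obtain ⟨k, hki, hkle⟩ := (key i (b - u i)).mpr ⟨j', hjG, hj''⟩
          have hkb : u k ≤ b := by
            rwa [tsub_add_cancel_of_le hui] at hkle
          have hkT : k ∈ Finset.univ.filter (fun j => u j ≤ b) := by simp [hkb]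
          exact absurd (hmin k hkT) (not_le.mpr hki)
        · congr 1
          rw [add_tsub_cancel_of_le hui]
      -- decompose f
      have : f = ∑ b ∈ f.support, (f.coeff b) • monomial b (1 : K) := by
        conv_lhs => rw [f.as_sum]
        refine Finset.sum_congr rfl fun b _ => ?_
        rw [smul_monomial, smul_eq_mul, mul_one]
      rw [this]
      exact Submodule.sum_mem _ fun b hb =>
        Submodule.smul_mem _ _ (Submodule.subset_span (hmono b hb))
  · intro i
    rw [Finset.card_compl, Fintype.card_fin]
    exact Nat.sub_le_sub_left (Finset.le_sup (Finset.mem_univ i)) n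
end

section
/- Let Δ be a simplicial complex on [n] and P : Δ = ⋃_{i=1}^t [F_i, G_i] a partition of Δ into disjoint intervals [F_i,G_i] = {H : F_i ⊆ H ⊆ G_i}. Then S/I_Δ = ⊕_{i=1}^t x_{F_i} K[Z_{G_i}] is a squarefree Stanley decomposition of S/I_Δ, where x_{F_i} = ∏_{j∈F_i} x_j and Z_{G_i} = {x_j : j ∈ G_i}. -/
open MvPolynomial

section Aux
variable {n : ℕ}

lemma eT_apply (T : Finset (Fin n)) (k : Fin n) :
    (∑ j ∈ T, Finsupp.single j (1:ℕ)) k = if k ∈ T then 1 else 0 := by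
  classical
  rw [Finsupp.finset_sum_apply]
  simp [Finsupp.single_apply]

lemma eT_support (T : Finset (Fin n)) :
    (∑ j ∈ T, Finsupp.single j (1:ℕ)).support = T := by
  ext k
  simp [Finsupp.mem_support_iff, eT_apply]

lemma eT_le_iff (T : Finset (Fin n)) (a : Fin n →₀ ℕ) :
    (∑ j ∈ T, Finsupp.single j (1:ℕ)) ≤ a ↔ T ⊆ a.support := by
  rw [Finsupp.le_def]
  constructor
  · intro h k hk
    have := h k
    rw [eT_apply, if_pos hk] at this
    rw [Finsupp.mem_support_iff]; omega
  · intro h k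
    rw [eT_apply]
    split
    · next hk => have := h hk; rw [Finsupp.mem_support_iff] at this; omega
    · exact Nat.zero_le _

lemma eT_add_support (T : Finset (Fin n)) (b : Fin n →₀ ℕ) :
    ((∑ j ∈ T, Finsupp.single j (1:ℕ)) + b).support = T ∪ b.support := by
  ext k
  simp only [Finsupp.mem_support_iff, Finsupp.add_apply, Finset.mem_union, eT_apply]
  split <;> simp_all <;> omega

end Aux

/-- Let `Δ` be a simplicial complex on `[n]` and
`P : Δ = ⋃_{i=1}^t [F_i, G_i]` a partition of `Δ` into disjoint intervals
(`every H ∈ Δ lies in exactly one interval [F_i, G_i]`).  Then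
`S/I_Δ = ⊕_{i=1}^t x_{F_i} K[Z_{G_i}]` is a squarefree Stanley
decomposition of the Stanley–Reisner ring: the residue classes of the
monomials `x_{F_i} · x^b` with `supp b ⊆ G_i` form a `K`-basis of `S/I_Δ`. -/
theorem stmt18 (K : Type) [Field K] (n t : ℕ)
    (Δ : Finset (Finset (Fin n)))
    (hΔ : ∀ F ∈ Δ, ∀ G ⊆ F, G ∈ Δ)
    (F G : Fin t → Finset (Fin n))
    (hFG : ∀ i, F i ⊆ G i) (hGΔ : ∀ i, G i ∈ Δ)
    (hpart : ∀ H : Finset (Fin n),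
        H ∈ Δ ↔ ∃! i : Fin t, F i ⊆ H ∧ H ⊆ G i) :
    LinearIndependent K
      (fun p : Σ i : Fin t, {b : Fin n →₀ ℕ // ↑b.support ⊆ (G i : Set (Fin n))} =>
        Ideal.Quotient.mk
          (Ideal.span {g : MvPolynomial (Fin n) K |
            ∃ T : Finset (Fin n), T ∉ Δ ∧ g = monomial (∑ j ∈ T, Finsupp.single j 1) (1 : K)})
          (monomial ((∑ j ∈ F p.1, Finsupp.single j 1) + p.2.val) (1 : K))) ∧
    Submodule.span K
      (Set.range
        (fun p : Σ i : Fin t, {b : Fin n →₀ ℕ // ↑b.support ⊆ (G i : Set (Fin n))} =>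
          Ideal.Quotient.mk
            (Ideal.span {g : MvPolynomial (Fin n) K |
              ∃ T : Finset (Fin n), T ∉ Δ ∧ g = monomial (∑ j ∈ T, Finsupp.single j 1) (1 : K)})
            (monomial ((∑ j ∈ F p.1, Finsupp.single j 1) + p.2.val) (1 : K)))) = ⊤ := by
  classical
  set I : Ideal (MvPolynomial (Fin n) K) :=
    Ideal.span {g : MvPolynomial (Fin n) K |
      ∃ T : Finset (Fin n), T ∉ Δ ∧ g = monomial (∑ j ∈ T, Finsupp.single j 1) (1 : K)} with hI
  -- key: coefficients at "good" exponents vanish on I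
  have key : ∀ f ∈ I, ∀ a : Fin n →₀ ℕ, a.support ∈ Δ → coeff a f = 0 := by
    intro f hf
    refine Submodule.span_induction ?_ ?_ ?_ ?_ hf
    · rintro x ⟨T, hT, rfl⟩ a ha
      rw [coeff_monomial]
      split
      · next h =>
        exfalso; apply hT
        rw [← h, eT_support] at ha; exact ha
      · rfl
    · intro a _; simp
    · intro x y _ _ hx hy a ha
      rw [coeff_add, hx a ha, hy a ha, add_zero]
    · intro c x _ hx a ha
      rw [smul_eq_mul, coeff_mul]
      refine Finset.sum_eq_zero fun uv huv => ?_
      rw [Finset.HasAntidiagonal.mem_antidiagonal] at huv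
      have hle : uv.2 ≤ a := huv ▸ le_add_self
      have : uv.2.support ∈ Δ := hΔ _ ha _ (Finsupp.support_mono hle)
      rw [hx _ this, mul_zero]
  -- the exponent map
  set E : (Σ i : Fin t, {b : Fin n →₀ ℕ // ↑b.support ⊆ (G i : Set (Fin n))}) → (Fin n →₀ ℕ) :=
    fun p => (∑ j ∈ F p.1, Finsupp.single j 1) + p.2.val with hE
  have hEsupp : ∀ p, F p.1 ⊆ (E p).support ∧ (E p).support ⊆ G p.1 := by
    rintro ⟨i, b, hb⟩
    rw [hE]
    simp only [eT_add_support]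
    constructor
    · exact Finset.subset_union_left
    · refine Finset.union_subset (hFG i) ?_
      exact_mod_cast hb
  have hEgood : ∀ p, (E p).support ∈ Δ := fun p =>
    hΔ _ (hGΔ p.1) _ (hEsupp p).2
  have hEinj : Function.Injective E := by
    rintro ⟨i, b, hb⟩ ⟨j, c, hc⟩ h
    have hgood : (E ⟨i, b, hb⟩).support ∈ Δ := hEgood _
    obtain ⟨k, -, huniq⟩ := (hpart _).1 hgood
    have hij : i = j := by
      have h1 : i = k := (huniq i ⟨(hEsupp ⟨i, b, hb⟩).1, (hEsupp ⟨i, b, hb⟩).2⟩).symm ▸ rfl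
      have hi := huniq i ⟨(hEsupp ⟨i, b, hb⟩).1, (hEsupp ⟨i, b, hb⟩).2⟩
      have hj := huniq j (by rw [h]; exact ⟨(hEsupp ⟨j, c, hc⟩).1, (hEsupp ⟨j, c, hc⟩).2⟩)
      rw [hi, hj]
    subst hij
    have hbc : b = c := by
      have := h
      rw [hE] at this
      simpa using add_left_cancel this
    subst hbc; rfl
  constructor
  · -- linear independence
    rw [linearIndependent_iff']
    intro s g hsum p hp
    have hmem : (∑ q ∈ s, g q • monomial (E q) (1:K)) ∈ I := by
      rw [← Ideal.Quotient.eq_zero_iff_mem, ← hsum]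
      rw [map_sum]
      refine Finset.sum_congr rfl fun q _ => ?_
      exact (map_smul (Ideal.Quotient.mkₐ K I) (g q) (monomial (E q) 1)).symm
    have hc := key _ hmem (E p) (hEgood p)
    rw [coeff_sum] at hc
    have : ∀ q ∈ s, coeff (E p) (g q • monomial (E q) (1:K)) = if q = p then g q else 0 := by
      intro q _
      rw [coeff_smul, coeff_monomial]
      by_cases h : q = p
      · subst h; simp
      · rw [if_neg (fun hEq => h (hEinj hEq)), if_neg h, smul_zero]
    rw [Finset.sum_congr rfl this, Finset.sum_ite_eq' s p (fun q => g q), if_pos hp] at hc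
    exact hc
  · -- spanning
    rw [eq_top_iff]
    rintro x -
    obtain ⟨f, rfl⟩ := Ideal.Quotient.mk_surjective x
    have hmono : ∀ a : Fin n →₀ ℕ, Ideal.Quotient.mk I (monomial a (1:K)) ∈
        Submodule.span K (Set.range
          (fun p : Σ i : Fin t, {b : Fin n →₀ ℕ // ↑b.support ⊆ (G i : Set (Fin n))} =>
            Ideal.Quotient.mk I (monomial ((∑ j ∈ F p.1, Finsupp.single j 1) + p.2.val) (1 : K)))) := by
      intro a
      by_cases ha : a.support ∈ Δ
      · obtain ⟨i, ⟨hFi, hGi⟩, -⟩ := (hpart _).1 ha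
        have hle : (∑ j ∈ F i, Finsupp.single j (1:ℕ)) ≤ a := (eT_le_iff _ _).2 hFi
        have hb : ↑(a - ∑ j ∈ F i, Finsupp.single j (1:ℕ)).support ⊆ (G i : Set (Fin n)) := by
          refine Set.Subset.trans ?_ (Finset.coe_subset.2 hGi)
          exact Finset.coe_subset.2 (Finsupp.support_mono tsub_le_self)
        refine Submodule.subset_span ⟨⟨i, ⟨a - ∑ j ∈ F i, Finsupp.single j (1:ℕ), hb⟩⟩, ?_⟩
        simp only
        rw [add_tsub_cancel_of_le hle]
      · have hmem : monomial a (1:K) ∈ I := by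
          have heq : monomial a (1:K) =
              monomial (a - ∑ j ∈ a.support, Finsupp.single j (1:ℕ)) (1:K) *
                monomial (∑ j ∈ a.support, Finsupp.single j (1:ℕ)) (1:K) := by
            rw [monomial_mul, one_mul, tsub_add_cancel_of_le ((eT_le_iff _ _).2 (subset_refl _))]
          rw [heq]
          exact Ideal.mul_mem_left _ _ (Ideal.subset_span ⟨a.support, ha, rfl⟩)
        rw [Ideal.Quotient.eq_zero_iff_mem.2 hmem]
        exact Submodule.zero_mem _
    have heq : Ideal.Quotient.mk I f
        = ∑ a ∈ f.support, coeff a f • Ideal.Quotient.mk I (monomial a (1:K)) := by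
      conv_lhs => rw [f.as_sum]
      rw [map_sum]
      refine Finset.sum_congr rfl fun a _ => ?_
      have h1 : (monomial a) (coeff a f) = coeff a f • monomial a (1:K) := by
        rw [smul_monomial, smul_eq_mul, mul_one]
      rw [h1]
      exact map_smul (Ideal.Quotient.mkₐ K I) _ _
    rw [heq]
    exact Submodule.sum_smul_mem _ _ fun a _ => hmono a
end
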